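/- arXiv:2308.14086 — 5 statements merged into one kernel-verified Lean document; each statement's English description precedes it below -/
import Mathlib

section
/- Let X be a complex Banach space, S_p : X → X a bounded linear operator, and let v : ℕ → X satisfy v(n) ≠ 0 for all n and ‖v(n+1) − S_p v(n)‖ / ‖v(n)‖ → 0 as n → ∞. Let 0 ≤ a ≤ b and let P be a bounded linear projection on X commuting with S_p such that the spectrum of the restriction V of S_p to ker P is contained in {z ∈ ℂ : |z| < a} and the spectrum of the restriction U of S_p to ran P is contained in {z ∈ ℂ : |z| > b}. Write Q := I − P. Then one of the following two alternatives holds: (i) ‖P v(n)‖ / ‖Q v(n)‖ → ∞ as n → ∞ (with the convention that the ratio is ∞ when Q v(n) = 0) and liminf_{n→∞} ‖v(n)‖^{1/n} ≥ b; or (ii) ‖P v(n)‖ / ‖Q v(n)‖ → 0 as n → ∞ and limsup_{n→∞} ‖v(n)‖^{1/n} ≤ a. -/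
open Filter Topology ENNReal

set_option maxHeartbeats 1000000

lemma contract_tendsto_zero {κ : ℝ} (hκ0 : 0 ≤ κ) (hκ1 : κ < 1)
    {r u : ℕ → ℝ} (hr : ∀ n, 0 ≤ r n) (hu : Tendsto u atTop (𝓝 0))
    (h : ∀ᶠ n in atTop, r (n + 1) ≤ κ * r n + u n) :
    Tendsto r atTop (𝓝 0) := by
  rw [Metric.tendsto_atTop]
  intro ε hε
  have hev : ∀ᶠ n in atTop, u n ≤ (1 - κ) * (ε / 2) ∧ r (n + 1) ≤ κ * r n + u n := by
    filter_upwards [h, hu.eventually (eventually_le_nhds (by nlinarith : (0:ℝ) < (1 - κ) * (ε / 2)))] with n h1 h2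
    exact ⟨h2, h1⟩
  obtain ⟨n₁, hn₁⟩ := hev.exists_forall_of_atTop
  have key : ∀ k, r (n₁ + k) ≤ κ ^ k * r n₁ + ε / 2 := by
    intro k
    induction k with
    | zero => simpa using by linarith [hr n₁]
    | succ k ih =>
      have h1 := (hn₁ (n₁ + k) (Nat.le_add_right _ _)).2
      have h2 := (hn₁ (n₁ + k) (Nat.le_add_right _ _)).1
      have h3 : κ * r (n₁ + k) ≤ κ * (κ ^ k * r n₁ + ε / 2) :=
        mul_le_mul_of_nonneg_left ih hκ0
      have : r (n₁ + k + 1) ≤ κ * (κ ^ k * r n₁ + ε / 2) + (1 - κ) * (ε / 2) := by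
        linarith
      calc r (n₁ + (k + 1)) = r (n₁ + k + 1) := by ring_nf
        _ ≤ κ ^ (k + 1) * r n₁ + ε / 2 := by rw [pow_succ]; nlinarith
  have hpow : Tendsto (fun k => κ ^ k * r n₁) atTop (𝓝 0) := by
    simpa using (tendsto_pow_atTop_nhds_zero_of_lt_one hκ0 hκ1).mul_const (r n₁)
  obtain ⟨k₀, hk₀⟩ := (Metric.tendsto_atTop.mp hpow) (ε / 2) (by linarith)
  refine ⟨n₁ + k₀, fun n hn => ?_⟩
  have h4 : r n ≤ κ ^ (n - n₁) * r n₁ + ε / 2 := by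
    have := key (n - n₁)
    rwa [Nat.add_sub_cancel' (by omega)] at this
  have h5 : κ ^ (n - n₁) * r n₁ < ε / 2 := by
    have := hk₀ (n - n₁) (by omega)
    rwa [Real.dist_eq, sub_zero,
      abs_of_nonneg (mul_nonneg (pow_nonneg hκ0 _) (hr n₁))] at this
  rw [Real.dist_eq, sub_zero, abs_of_nonneg (hr n)]
  linarith

lemma scalar_dichotomy' {α γ δ : ℕ → ℝ} {ρ β : ℝ}
    (hρ0 : 0 ≤ ρ) (hρβ : ρ < β)
    (hα0 : ∀ n, 0 ≤ α n) (hγ0 : ∀ n, 0 ≤ γ n) (hδ0 : ∀ n, 0 ≤ δ n)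
    (hpos : ∀ n, 0 < α n + γ n)
    (hrecα : ∀ n, β * α n - δ n * (α n + γ n) ≤ α (n + 1))
    (hrecγ : ∀ n, γ (n + 1) ≤ ρ * γ n + δ n * (α n + γ n))
    (hδ : Tendsto δ atTop (𝓝 0)) :
    ((∃ n₀, ∀ n ≥ n₀, γ n ≤ α n) ∧ Tendsto (fun n => γ n / α n) atTop (𝓝 0)) ∨
    ((∃ n₀, ∀ n ≥ n₀, α n < γ n) ∧ Tendsto (fun n => α n / γ n) atTop (𝓝 0)) := by
  have hβ0 : 0 < β := lt_of_le_of_lt hρ0 hρβ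
  set η := (β - ρ) / 4 with hη
  have hη0 : 0 < η := by rw [hη]; linarith
  obtain ⟨n₀, hn₀⟩ :=
    (hδ.eventually (eventually_le_nhds hη0)).exists_forall_of_atTop
  by_cases hc : ∃ n₁, n₀ ≤ n₁ ∧ γ n₁ ≤ α n₁
  · -- cone case
    obtain ⟨n₁, hn₁0, hcone1⟩ := hc
    -- cone invariance and positivity
    have cone : ∀ n, n₁ ≤ n → γ n ≤ α n ∧ 0 < α n := by
      intro n hn
      induction n, hn using Nat.le_induction with
      | base =>
        refine ⟨hcone1, ?_⟩
        have := hpos n₁; linarith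
      | succ n hn ih =>
        obtain ⟨hc1, hc2⟩ := ih
        have hδn : δ n ≤ η := hn₀ n (le_trans hn₁0 hn)
        have h1 : γ (n + 1) ≤ (ρ + 2 * δ n) * α n := by
          have := hrecγ n
          nlinarith [hδ0 n]
        have h2 : (β - 2 * δ n) * α n ≤ α (n + 1) := by
          have := hrecα n
          nlinarith [hδ0 n]
        constructor
        · have : (ρ + 2 * δ n) * α n ≤ (β - 2 * δ n) * α n := by
            nlinarith
          linarith
        · have : 0 < (β - 2 * δ n) * α n := by
            have : β - 2 * δ n ≥ (β + ρ) / 2 := by rw [hη] at hδn; linarith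
            nlinarith
          linarith
    left
    refine ⟨⟨n₁, fun n hn => (cone n hn).1⟩, ?_⟩
    -- ratio recurrence
    set κ := 2 * ρ / (β + ρ) with hκ
    have hβρ : 0 < β + ρ := by linarith
    have hκ0 : 0 ≤ κ := by positivity
    have hκ1 : κ < 1 := by
      rw [hκ, div_lt_one hβρ]; linarith
    have hrec : ∀ᶠ n in atTop, γ (n + 1) / α (n + 1) ≤ κ * (γ n / α n) + (4 / (β + ρ)) * δ n := by
      filter_upwards [eventually_ge_atTop n₁] with n hn
      obtain ⟨hc1, hc2⟩ := cone n hn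
      have hc3 := (cone (n + 1) (by omega)).2
      have hδn : δ n ≤ η := hn₀ n (le_trans hn₁0 hn)
      have h1 : γ (n + 1) ≤ ρ * γ n + 2 * δ n * α n := by
        have := hrecγ n; nlinarith [hδ0 n]
      have h2 : ((β + ρ) / 2) * α n ≤ α (n + 1) := by
        have := hrecα n
        have h2' : δ n * (α n + γ n) ≤ 2 * δ n * α n := by nlinarith [hδ0 n]
        rw [hη] at hδn; nlinarith
      have hd : γ (n + 1) / α (n + 1) ≤ (ρ * γ n + 2 * δ n * α n) / (((β + ρ) / 2) * α n) := by
        apply div_le_div₀ (by nlinarith [hγ0 n, hδ0 n]) h1 (by positivity) h2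
      refine hd.trans (le_of_eq ?_)
      rw [hκ]
      field_simp
      ring
    have := contract_tendsto_zero hκ0 hκ1
      (fun n => div_nonneg (hγ0 n) (hα0 n))
      (by simpa using hδ.const_mul (4 / (β + ρ))) hrec
    exact this
  · -- α < γ case
    push_neg at hc
    right
    have hlt : ∀ n, n₀ ≤ n → α n < γ n := fun n hn => hc n hn
    refine ⟨⟨n₀, hlt⟩, ?_⟩
    have hγpos : ∀ n, n₀ ≤ n → 0 < γ n := fun n hn => lt_of_le_of_lt (hα0 n) (hlt n hn)
    have hslt1 : ∀ n, n₀ ≤ n → α n / γ n < 1 := fun n hn =>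
      (div_lt_one (hγpos n hn)).mpr (hlt n hn)
    rw [Metric.tendsto_atTop]
    intro ε hε
    have hd0 : 0 < min η ((β - ρ) * ε / 8) := lt_min hη0 (by nlinarith)
    obtain ⟨n₂', hn₂⟩ := (hδ.eventually (eventually_le_nhds hd0)).exists_forall_of_atTop
    set n₂ := max n₂' n₀ with hn₂def
    set lam := (3 * β + ρ) / (2 * (β + ρ)) with hlam
    have hβρ : 0 < β + ρ := by linarith
    have hlam1 : 1 < lam := by
      rw [hlam, lt_div_iff₀ (by linarith)]; linarith
    -- expansion step
    have step : ∀ n, n₂ ≤ n → ε ≤ α n / γ n → lam * (α n / γ n) ≤ α (n + 1) / γ (n + 1) := by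
      intro n hn hs
      have hn0 : n₀ ≤ n := le_trans (le_max_right _ _) hn
      have hγn := hγpos n hn0
      have hγn1 := hγpos (n + 1) (by omega)
      have hδn : δ n ≤ min η ((β - ρ) * ε / 8) := hn₂ n (le_trans (le_max_left _ _) hn)
      have hδη : δ n ≤ η := le_trans hδn (min_le_left _ _)
      have hδε : δ n ≤ (β - ρ) * ε / 8 := le_trans hδn (min_le_right _ _)
      set s := α n / γ n with hs'
      have hαeq : s * γ n = α n := div_mul_cancel₀ (α n) hγn.ne'
      have hsε : ε ≤ s := hs
      have hs0 : 0 ≤ s := le_trans hε.le hsε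
      have h1 : (β * s - 2 * δ n) * γ n ≤ α (n + 1) := by
        have hr := hrecα n
        have h1' : δ n * (α n + γ n) ≤ 2 * δ n * γ n := by
          have := mul_le_mul_of_nonneg_left
            (show α n + γ n ≤ 2 * γ n by linarith [(hlt n hn0).le]) (hδ0 n)
          linarith
        have heq : (β * s - 2 * δ n) * γ n = β * (s * γ n) - 2 * δ n * γ n := by ring
        rw [heq, hαeq]
        linarith
      have h2 : γ (n + 1) ≤ (ρ + 2 * δ n) * γ n := by
        have hr := hrecγ n
        have h2' : δ n * (α n + γ n) ≤ 2 * δ n * γ n := by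
          have := mul_le_mul_of_nonneg_left
            (show α n + γ n ≤ 2 * γ n by linarith [(hlt n hn0).le]) (hδ0 n)
          linarith
        nlinarith
      have hls0 : 0 ≤ lam * s := mul_nonneg (by linarith) hs0
      have key : lam * s * (ρ + 2 * δ n) ≤ β * s - 2 * δ n := by
        have e1 : ρ + 2 * δ n ≤ (β + ρ) / 2 := by rw [hη] at hδη; linarith
        have e2 : 2 * δ n ≤ (β - ρ) * s / 4 := by
          have := mul_le_mul_of_nonneg_left hsε (show (0:ℝ) ≤ β - ρ by linarith)
          linarith
        have e3 : lam * s * (ρ + 2 * δ n) ≤ lam * s * ((β + ρ) / 2) :=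
          mul_le_mul_of_nonneg_left e1 hls0
        have e4 : lam * s * ((β + ρ) / 2) = s * (3 * β + ρ) / 4 := by
          rw [hlam]; field_simp; ring
        have e5 : s * (3 * β + ρ) / 4 ≤ β * s - 2 * δ n := by linarith
        linarith
      rw [le_div_iff₀ hγn1]
      calc lam * s * γ (n + 1) ≤ lam * s * ((ρ + 2 * δ n) * γ n) :=
            mul_le_mul_of_nonneg_left h2 hls0
        _ = lam * s * (ρ + 2 * δ n) * γ n := by ring
        _ ≤ (β * s - 2 * δ n) * γ n := mul_le_mul_of_nonneg_right key hγn.le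
        _ ≤ α (n + 1) := h1
    -- no n ≥ n₂ can have s n ≥ ε
    have main : ∀ n, n₂ ≤ n → α n / γ n < ε := by
      intro n hn
      by_contra hcon
      push_neg at hcon
      have grow : ∀ k, lam ^ k * ε ≤ α (n + k) / γ (n + k) := by
        intro k
        induction k with
        | zero => simpa using hcon
        | succ k ih =>
          have hk1 : (1:ℝ) ≤ lam ^ k := one_le_pow₀ hlam1.le
          have hεk : ε ≤ α (n + k) / γ (n + k) :=
            le_trans (le_mul_of_one_le_left hε.le hk1) ih
          have hst := step (n + k) (by omega) hεk
          calc lam ^ (k + 1) * ε = lam * (lam ^ k * ε) := by ring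
            _ ≤ lam * (α (n + k) / γ (n + k)) :=
              mul_le_mul_of_nonneg_left ih (by linarith)
            _ ≤ α (n + k + 1) / γ (n + k + 1) := hst
      obtain ⟨k, hk⟩ := pow_unbounded_of_one_lt (1 / ε) hlam1
      have h1 : 1 < lam ^ k * ε := by
        rw [div_lt_iff₀ hε] at hk; linarith
      have h2 := grow k
      have h3 := hslt1 (n + k) (by omega)
      linarith
    refine ⟨n₂, fun n hn => ?_⟩
    rw [Real.dist_eq, sub_zero,
      abs_of_nonneg (div_nonneg (hα0 n) (hγ0 n))]
    exact main n hn

lemma exists_pow_apply_le' {E : Type*} [NormedAddCommGroup E] [NormedSpace ℂ E]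
    [CompleteSpace E] (T : E →L[ℂ] E) {θ : ℝ} (hθ : 0 < θ)
    (h : spectralRadius ℂ T < ENNReal.ofReal θ) :
    ∃ m : ℕ, 0 < m ∧ ∀ x, ‖(T ^ m) x‖ ≤ θ ^ m * ‖x‖ := by
  have htd := spectrum.pow_nnnorm_pow_one_div_tendsto_nhds_spectralRadius T
  have hev : ∀ᶠ m : ℕ in atTop, ((‖T ^ m‖₊ : ℝ≥0∞) ^ (1 / (m:ℝ))) < ENNReal.ofReal θ :=
    htd.eventually_lt_const h
  obtain ⟨m, hm1, hm2⟩ : ∃ m : ℕ, 1 ≤ m ∧ (‖T ^ m‖₊ : ℝ≥0∞) ^ (1 / (m:ℝ)) < ENNReal.ofReal θ := by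
    obtain ⟨m0, hm0⟩ := hev.exists_forall_of_atTop
    exact ⟨max m0 1, le_max_right _ _, hm0 _ (le_max_left _ _)⟩
  refine ⟨m, hm1, ?_⟩
  have hmne : (m:ℝ) ≠ 0 := Nat.cast_ne_zero.mpr (by omega)
  have hmp : (0:ℝ) < (m:ℝ) := by positivity
  have h1 := ENNReal.rpow_lt_rpow hm2 hmp
  rw [← ENNReal.rpow_mul, one_div, inv_mul_cancel₀ hmne, ENNReal.rpow_one,
    ENNReal.rpow_natCast, ← ENNReal.ofReal_pow hθ.le,
    ← ENNReal.ofReal_coe_nnreal, coe_nnnorm] at h1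
  have h2 : ‖T ^ m‖ < θ ^ m :=
    (ENNReal.ofReal_lt_ofReal_iff (by positivity)).mp h1
  intro x
  exact le_trans ((T ^ m).le_opNorm x)
    (mul_le_mul_of_nonneg_right h2.le (norm_nonneg x))

lemma adapted_norm' {E : Type*} [NormedAddCommGroup E] [NormedSpace ℂ E]
    (T : E →L[ℂ] E) {θ : ℝ} (hθ : 0 < θ) {m : ℕ} (hm : 0 < m)
    (h : ∀ x, ‖(T ^ m) x‖ ≤ θ ^ m * ‖x‖) :
    ∃ (N : E → ℝ) (C : ℝ), 0 < C ∧ (∀ x, ‖x‖ ≤ N x) ∧ (∀ x, N x ≤ C * ‖x‖) ∧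
      (∀ x y, N (x + y) ≤ N x + N y) ∧ (∀ x, N (-x) = N x) ∧
      (∀ x, N (T x) ≤ θ * N x) := by
  refine ⟨fun x => ∑ k ∈ Finset.range m, θ⁻¹ ^ k * ‖(T ^ k) x‖,
    (∑ k ∈ Finset.range m, θ⁻¹ ^ k * ‖T ^ k‖) + 1, ?_, ?_, ?_, ?_, ?_, ?_⟩
  · have : 0 ≤ ∑ k ∈ Finset.range m, θ⁻¹ ^ k * ‖T ^ k‖ :=
      Finset.sum_nonneg fun k _ => mul_nonneg (pow_nonneg (by positivity) k) (norm_nonneg _)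
    linarith
  · intro x
    have h0 : (0:ℕ) ∈ Finset.range m := Finset.mem_range.mpr hm
    have := Finset.single_le_sum
      (f := fun k => θ⁻¹ ^ k * ‖(T ^ k) x‖)
      (fun k _ => mul_nonneg (pow_nonneg (by positivity) k) (norm_nonneg _)) h0
    simpa using this
  · intro x
    have h1 : ∀ k ∈ Finset.range m, θ⁻¹ ^ k * ‖(T ^ k) x‖ ≤ (θ⁻¹ ^ k * ‖T ^ k‖) * ‖x‖ := by
      intro k _
      rw [mul_assoc]
      exact mul_le_mul_of_nonneg_left ((T ^ k).le_opNorm x) (pow_nonneg (by positivity) k)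
    calc ∑ k ∈ Finset.range m, θ⁻¹ ^ k * ‖(T ^ k) x‖
        ≤ ∑ k ∈ Finset.range m, (θ⁻¹ ^ k * ‖T ^ k‖) * ‖x‖ := Finset.sum_le_sum h1
      _ = (∑ k ∈ Finset.range m, θ⁻¹ ^ k * ‖T ^ k‖) * ‖x‖ := by rw [← Finset.sum_mul]
      _ ≤ ((∑ k ∈ Finset.range m, θ⁻¹ ^ k * ‖T ^ k‖) + 1) * ‖x‖ := by
          have := norm_nonneg x; nlinarith
  · intro x y
    rw [← Finset.sum_add_distrib]
    apply Finset.sum_le_sum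
    intro k _
    rw [← mul_add]
    exact mul_le_mul_of_nonneg_left (by rw [map_add]; exact norm_add_le _ _)
      (pow_nonneg (by positivity) k)
  · intro x
    simp
  · intro x
    show (∑ k ∈ Finset.range m, θ⁻¹ ^ k * ‖(T ^ k) (T x)‖)
      ≤ θ * ∑ k ∈ Finset.range m, θ⁻¹ ^ k * ‖(T ^ k) x‖
    have hgm : θ⁻¹ ^ m * ‖(T ^ m) x‖ ≤ ‖x‖ := by
      have := mul_le_mul_of_nonneg_left (h x) (pow_nonneg (inv_nonneg.mpr hθ.le) m)
      calc θ⁻¹ ^ m * ‖(T ^ m) x‖ ≤ θ⁻¹ ^ m * (θ ^ m * ‖x‖) := this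
        _ = ‖x‖ := by
            rw [← mul_assoc, ← mul_pow, inv_mul_cancel₀ hθ.ne', one_pow, one_mul]
    have happ : ∀ k, (T ^ k) (T x) = (T ^ (k + 1)) x := by
      intro k
      rw [pow_succ, ContinuousLinearMap.mul_apply]
    have step1 : ∑ k ∈ Finset.range m, θ⁻¹ ^ k * ‖(T ^ k) (T x)‖
        = θ * ∑ k ∈ Finset.range m, θ⁻¹ ^ (k + 1) * ‖(T ^ (k + 1)) x‖ := by
      rw [Finset.mul_sum]
      apply Finset.sum_congr rfl
      intro k _
      rw [happ k, ← mul_assoc]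
      congr 1
      rw [pow_succ, ← mul_assoc, mul_comm θ, mul_assoc, mul_inv_cancel₀ hθ.ne', mul_one]
    have step2 : ∑ k ∈ Finset.range m, θ⁻¹ ^ (k + 1) * ‖(T ^ (k + 1)) x‖
        = (∑ k ∈ Finset.range m, θ⁻¹ ^ k * ‖(T ^ k) x‖) + θ⁻¹ ^ m * ‖(T ^ m) x‖
          - θ⁻¹ ^ 0 * ‖(T ^ 0) x‖ := by
      have := Finset.sum_range_succ' (fun k => θ⁻¹ ^ k * ‖(T ^ k) x‖) m
      rw [Finset.sum_range_succ (fun k => θ⁻¹ ^ k * ‖(T ^ k) x‖) m] at this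
      linarith [this]
    rw [step1, step2]
    have hx0 : θ⁻¹ ^ 0 * ‖(T ^ 0) x‖ = ‖x‖ := by simp
    rw [hx0]
    have : (∑ k ∈ Finset.range m, θ⁻¹ ^ k * ‖(T ^ k) x‖) + θ⁻¹ ^ m * ‖(T ^ m) x‖ - ‖x‖
        ≤ ∑ k ∈ Finset.range m, θ⁻¹ ^ k * ‖(T ^ k) x‖ := by linarith
    exact mul_le_mul_of_nonneg_left this hθ.le

lemma stable_side' {E : Type*} [NormedAddCommGroup E] [NormedSpace ℂ E]
    [CompleteSpace E] (V : E →L[ℂ] E) (a : ℝ) (ha : 0 ≤ a)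
    (hσ : spectrum ℂ V ⊆ {z : ℂ | ‖z‖ < a}) :
    ∃ (ρ : ℝ) (Ns : E → ℝ) (Cs : ℝ), 0 ≤ ρ ∧ ρ ≤ a ∧ (ρ < a ∨ ∀ x : E, x = 0) ∧
      0 < Cs ∧ (∀ x, ‖x‖ ≤ Ns x) ∧ (∀ x, Ns x ≤ Cs * ‖x‖) ∧
      (∀ x y, Ns (x + y) ≤ Ns x + Ns y) ∧ (∀ x, Ns (-x) = Ns x) ∧
      (∀ x, Ns (V x) ≤ ρ * Ns x) := by
  by_cases hsub : ∀ x : E, x = 0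
  · refine ⟨0, fun _ => 0, 1, le_refl 0, ha, Or.inr hsub, one_pos, ?_, ?_, ?_, ?_, ?_⟩
    · intro x; rw [hsub x]; simp
    · intro x; positivity
    · intro x y; simp
    · intro x; rfl
    · intro x; simp
  · push_neg at hsub
    obtain ⟨x₀, hx₀⟩ := hsub
    haveI : Nontrivial E := ⟨⟨x₀, 0, hx₀⟩⟩
    have hne : (spectrum ℂ V).Nonempty := spectrum.nonempty V
    obtain ⟨z₀, hz₀mem, hz₀max⟩ :=
      (spectrum.isCompact V).exists_isMaxOn hne continuous_norm.continuousOn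
    have hz₀a : ‖z₀‖ < a := hσ hz₀mem
    have hz₀0 : 0 ≤ ‖z₀‖ := norm_nonneg z₀
    have ha0 : 0 < a := lt_of_le_of_lt hz₀0 hz₀a
    set ρ := (‖z₀‖ + a) / 2 with hρdef
    have hρ0 : 0 < ρ := by rw [hρdef]; linarith
    have hρa : ρ < a := by rw [hρdef]; linarith
    have hsr : spectralRadius ℂ V < ENNReal.ofReal ρ := by
      have hb : spectralRadius ℂ V ≤ ENNReal.ofReal (‖z₀‖) := by
        rw [spectralRadius]
        apply iSup₂_le
        intro z hz
        rw [← ENNReal.ofReal_coe_nnreal, coe_nnnorm]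
        exact ENNReal.ofReal_le_ofReal (hz₀max hz)
      exact lt_of_le_of_lt hb ((ENNReal.ofReal_lt_ofReal_iff hρ0).mpr (by rw [hρdef]; linarith))
    obtain ⟨m, hm, hpow⟩ := exists_pow_apply_le' V hρ0 hsr
    obtain ⟨N, C, hC, h1, h2, h3, h4, h5⟩ := adapted_norm' V hρ0 hm hpow
    exact ⟨ρ, N, C, hρ0.le, hρa.le, Or.inl hρa, hC, h1, h2, h3, h4, h5⟩

lemma unstable_side' {E : Type*} [NormedAddCommGroup E] [NormedSpace ℂ E]
    [CompleteSpace E] (U : E →L[ℂ] E) (b : ℝ) (hb : 0 ≤ b)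
    (hσ : spectrum ℂ U ⊆ {z : ℂ | b < ‖z‖}) :
    ∃ (β : ℝ) (Nu : E → ℝ) (Cu : ℝ), b < β ∧ 0 < Cu ∧
      (∀ x, ‖x‖ ≤ Nu x) ∧ (∀ x, Nu x ≤ Cu * ‖x‖) ∧
      (∀ x y, Nu (x + y) ≤ Nu x + Nu y) ∧ (∀ x, Nu (-x) = Nu x) ∧
      (∀ x, β * Nu x ≤ Nu (U x)) := by
  by_cases hsub : ∀ x : E, x = 0
  · refine ⟨b + 1, fun _ => 0, 1, by linarith, one_pos, ?_, ?_, ?_, ?_, ?_⟩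
    · intro x; rw [hsub x]; simp
    · intro x; positivity
    · intro x y; simp
    · intro x; rfl
    · intro x; simp
  · push_neg at hsub
    obtain ⟨x₀, hx₀⟩ := hsub
    haveI : Nontrivial E := ⟨⟨x₀, 0, hx₀⟩⟩
    have hne : (spectrum ℂ U).Nonempty := spectrum.nonempty U
    obtain ⟨z₁, hz₁mem, hz₁min⟩ :=
      (spectrum.isCompact U).exists_isMinOn hne continuous_norm.continuousOn
    have hm₀ : b < ‖z₁‖ := hσ hz₁mem
    have hm₀0 : 0 < ‖z₁‖ := lt_of_le_of_lt hb hm₀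
    set β := (b + ‖z₁‖) / 2 with hβdef
    have hβ0 : 0 < β := by rw [hβdef]; linarith
    have hbβ : b < β := by rw [hβdef]; linarith
    have hβm : β < ‖z₁‖ := by rw [hβdef]; linarith
    have hUnit : IsUnit U := by
      have h0 : (0 : ℂ) ∉ spectrum ℂ U := by
        intro h0
        have := hσ h0
        simp only [Set.mem_setOf_eq, norm_zero] at this
        linarith
      exact spectrum.isUnit_of_zero_notMem ℂ h0
    set hu := hUnit.unit with hudef
    have hspec : (↑hu : E →L[ℂ] E) = U := hUnit.unit_spec
    set W := (↑hu⁻¹ : E →L[ℂ] E) with hWdef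
    have hsrW : spectralRadius ℂ W < ENNReal.ofReal (1 / β) := by
      have hb1 : spectralRadius ℂ W ≤ ENNReal.ofReal (1 / ‖z₁‖) := by
        rw [spectralRadius]
        apply iSup₂_le
        intro z hz
        have hzmem : z ∈ (spectrum ℂ (↑hu : E →L[ℂ] E))⁻¹ := by
          rw [spectrum.map_inv]
          exact hz
        rw [Set.mem_inv] at hzmem
        rw [hspec] at hzmem
        have hinv : ‖z₁‖ ≤ ‖z⁻¹‖ := hz₁min hzmem
        have hz0 : z ≠ 0 := by
          intro h
          rw [h, _root_.inv_zero, norm_zero] at hinv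
          linarith
        rw [← ENNReal.ofReal_coe_nnreal, coe_nnnorm]
        apply ENNReal.ofReal_le_ofReal
        rw [norm_inv] at hinv
        rw [le_inv_comm₀] at hinv
        · rwa [one_div]
        · exact hm₀0
        · exact norm_pos_iff.mpr hz0
      refine lt_of_le_of_lt hb1 ((ENNReal.ofReal_lt_ofReal_iff (by positivity)).mpr ?_)
      exact one_div_lt_one_div_of_lt hβ0 hβm
    obtain ⟨m, hm, hpow⟩ := exists_pow_apply_le' W (by positivity : (0:ℝ) < 1 / β) hsrW
    obtain ⟨N, C, hC, h1, h2, h3, h4, h5⟩ := adapted_norm' W (by positivity) hm hpow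
    have hWU : ∀ x : E, W (U x) = x := by
      intro x
      have hinvmul : ((↑hu⁻¹ : E →L[ℂ] E) * ↑hu) = 1 := hu.inv_mul
      calc W (U x) = ((↑hu⁻¹ : E →L[ℂ] E) * ↑hu) x := by
            rw [ContinuousLinearMap.mul_apply, hspec]
        _ = x := by rw [hinvmul, ContinuousLinearMap.one_apply]
    refine ⟨β, N, C, hbβ, hC, h1, h2, h3, h4, ?_⟩
    intro x
    have := h5 (U x)
    rw [hWU x] at this
    have h6 := mul_le_mul_of_nonneg_left this hβ0.le
    calc β * N x ≤ β * (1 / β * N (U x)) := h6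
      _ = N (U x) := by field_simp

/-- Dichotomy for asymptotically linear sequences (forward version):
if `‖v(n+1) - S_p v(n)‖/‖v(n)‖ → 0` and the spectrum of `S_p` splits into a part of
modulus `> b` (on `ran P`) and a part of modulus `< a` (on `ker P`), then either the
`P`-component dominates and `liminf ‖v(n)‖^{1/n} ≥ b`, or the `Q`-component dominates
and `limsup ‖v(n)‖^{1/n} ≤ a`. -/
theorem forward_dichotomy
    {X : Type*} [NormedAddCommGroup X] [NormedSpace ℂ X] [CompleteSpace X]
    (S P : X →L[ℂ] X)
    (hproj : P ∘L P = P) (hcomm : S ∘L P = P ∘L S)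
    (a b : ℝ) (ha : 0 ≤ a) (hab : a ≤ b)
    -- `V`, the restriction of `S` to `ker P`, has spectrum in `{|z| < a}`
    (V : LinearMap.ker (P : X →ₗ[ℂ] X) →L[ℂ] LinearMap.ker (P : X →ₗ[ℂ] X))
    (hV : ∀ x : LinearMap.ker (P : X →ₗ[ℂ] X), (V x : X) = S x)
    (hσV : spectrum ℂ V ⊆ {z : ℂ | ‖z‖ < a})
    -- `U`, the restriction of `S` to `ran P`, has spectrum in `{|z| > b}`
    (U : LinearMap.range (P : X →ₗ[ℂ] X) →L[ℂ] LinearMap.range (P : X →ₗ[ℂ] X))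
    (hU : ∀ x : LinearMap.range (P : X →ₗ[ℂ] X), (U x : X) = S x)
    (hσU : spectrum ℂ U ⊆ {z : ℂ | b < ‖z‖})
    (v : ℕ → X) (hvne : ∀ n, v n ≠ 0)
    (hv : Tendsto (fun n => ‖v (n + 1) - S (v n)‖ / ‖v n‖) atTop (𝓝 0)) :
    -- alternative (i): `‖P v(n)‖/‖Q v(n)‖ → ∞` and `liminf ‖v(n)‖^{1/n} ≥ b`
    ((∀ C : ℝ, ∀ᶠ n in atTop, C * ‖v n - P (v n)‖ ≤ ‖P (v n)‖) ∧
      ENNReal.ofReal b ≤ atTop.liminf fun n : ℕ =>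
        ENNReal.ofReal (‖v n‖ ^ (1 / (n : ℝ)))) ∨
    -- alternative (ii): `‖P v(n)‖/‖Q v(n)‖ → 0` and `limsup ‖v(n)‖^{1/n} ≤ a`
    ((∀ ε : ℝ, 0 < ε → ∀ᶠ n in atTop, ‖P (v n)‖ ≤ ε * ‖v n - P (v n)‖) ∧
      (atTop.limsup fun n : ℕ => ENNReal.ofReal (‖v n‖ ^ (1 / (n : ℝ)))) ≤
        ENNReal.ofReal a) := by
  have hPP : ∀ x, P (P x) = P x := fun x => by
    conv_rhs => rw [← hproj]
    rfl
  have hSP : ∀ x, S (P x) = P (S x) := fun x => by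
    have := ContinuousLinearMap.ext_iff.mp hcomm x
    simpa using this
  -- completeness of the two subspaces
  have hker_closed : IsClosed ((LinearMap.ker (P : X →ₗ[ℂ] X) : Submodule ℂ X) : Set X) := by
    have he : ((LinearMap.ker (P : X →ₗ[ℂ] X) : Submodule ℂ X) : Set X) = P ⁻¹' {0} := by
      ext x; simp [LinearMap.mem_ker]
    rw [he]; exact isClosed_singleton.preimage P.continuous
  haveI : CompleteSpace (LinearMap.ker (P : X →ₗ[ℂ] X)) := hker_closed.completeSpace_coe
  have hran_closed : IsClosed ((LinearMap.range (P : X →ₗ[ℂ] X) : Submodule ℂ X) : Set X) := by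
    have he : ((LinearMap.range (P : X →ₗ[ℂ] X) : Submodule ℂ X) : Set X) = (fun x => P x - x) ⁻¹' {0} := by
      ext x
      simp only [Set.mem_preimage, Set.mem_singleton_iff, SetLike.mem_coe,
        LinearMap.mem_range, sub_eq_zero]
      constructor
      · rintro ⟨y, rfl⟩; exact hPP y
      · intro h; exact ⟨x, h⟩
    rw [he]; exact isClosed_singleton.preimage (P.continuous.sub continuous_id)
  haveI : CompleteSpace (LinearMap.range (P : X →ₗ[ℂ] X)) := hran_closed.completeSpace_coe
  obtain ⟨ρ, Ns, Cs, hρ0, hρa, hρalt, hCs0, hNs1, hNs2, hNsadd, hNsneg, hNsV⟩ :=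
    stable_side' V a ha hσV
  obtain ⟨β, Nu, Cu, hbβ, hCu0, hNu1, hNu2, hNuadd, hNuneg, hNuU⟩ :=
    unstable_side' U b (le_trans ha hab) hσU
  have hb0 : 0 ≤ b := le_trans ha hab
  have hβ0 : 0 < β := lt_of_le_of_lt hb0 hbβ
  have hρβ : ρ < β := lt_of_le_of_lt (le_trans hρa hab) hbβ
  -- the components
  set p : ℕ → LinearMap.range (P : X →ₗ[ℂ] X) := fun n => ⟨P (v n), LinearMap.mem_range.mpr ⟨v n, rfl⟩⟩
    with hpdef
  set q : ℕ → LinearMap.ker (P : X →ₗ[ℂ] X) :=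
    fun n => ⟨v n - P (v n), by rw [LinearMap.mem_ker, ContinuousLinearMap.coe_coe, map_sub, hPP, sub_self]⟩ with hqdef
  set α : ℕ → ℝ := fun n => Nu (p n) with hαdef
  set γ : ℕ → ℝ := fun n => Ns (q n) with hγdef
  have hpnorm : ∀ n, ‖p n‖ = ‖P (v n)‖ := fun n => rfl
  have hqnorm : ∀ n, ‖q n‖ = ‖v n - P (v n)‖ := fun n => rfl
  have hα0 : ∀ n, 0 ≤ α n := fun n => le_trans (norm_nonneg (p n)) (hNu1 (p n))
  have hγ0 : ∀ n, 0 ≤ γ n := fun n => le_trans (norm_nonneg (q n)) (hNs1 (q n))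
  have hvle : ∀ n, ‖v n‖ ≤ α n + γ n := by
    intro n
    have h1 : v n = (p n : X) + (q n : X) := by
      show v n = P (v n) + (v n - P (v n)); abel
    calc ‖v n‖ = ‖(p n : X) + (q n : X)‖ := by rw [← h1]
      _ ≤ ‖(p n : X)‖ + ‖(q n : X)‖ := norm_add_le _ _
      _ ≤ α n + γ n := add_le_add (hNu1 (p n)) (hNs1 (q n))
  have hpos : ∀ n, 0 < α n + γ n :=
    fun n => lt_of_lt_of_le (norm_pos_iff.mpr (hvne n)) (hvle n)
  -- error and delta
  set K : ℝ := Cu * ‖P‖ + Cs * (1 + ‖P‖) with hKdef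
  have hK0 : 0 ≤ K := by
    have := norm_nonneg P
    nlinarith [hCu0, hCs0]
  set δ : ℕ → ℝ := fun n => K * (‖v (n + 1) - S (v n)‖ / ‖v n‖) with hδdef
  have hδ0 : ∀ n, 0 ≤ δ n :=
    fun n => mul_nonneg hK0 (div_nonneg (norm_nonneg _) (norm_nonneg _))
  have hδtend : Tendsto δ atTop (𝓝 0) := by
    have := hv.const_mul K
    simpa using this
  have herr : ∀ n, ‖v (n + 1) - S (v n)‖ = ‖v (n + 1) - S (v n)‖ / ‖v n‖ * ‖v n‖ :=
    fun n => (div_mul_cancel₀ _ (norm_ne_zero_iff.mpr (hvne n))).symm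
  -- recurrence for p
  have hp : ∀ n, p (n + 1) = U (p n) +
      ⟨P (v (n + 1) - S (v n)), LinearMap.mem_range.mpr ⟨_, rfl⟩⟩ := by
    intro n
    apply Subtype.ext
    show P (v (n + 1)) = (U (p n) : X) + P (v (n + 1) - S (v n))
    rw [hU (p n)]
    show P (v (n + 1)) = S (P (v n)) + P (v (n + 1) - S (v n))
    have eP : P (v (n + 1) - S (v n)) = P (v (n + 1)) - P (S (v n)) := map_sub P _ _
    rw [eP, hSP]
    abel
  have hq : ∀ n, q (n + 1) = V (q n) +
      ⟨(v (n + 1) - S (v n)) - P (v (n + 1) - S (v n)),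
        by rw [LinearMap.mem_ker, ContinuousLinearMap.coe_coe, map_sub, hPP, sub_self]⟩ := by
    intro n
    apply Subtype.ext
    show v (n + 1) - P (v (n + 1)) = (V (q n) : X) +
      ((v (n + 1) - S (v n)) - P (v (n + 1) - S (v n)))
    rw [hV (q n)]
    show v (n + 1) - P (v (n + 1)) = S (v n - P (v n)) +
      ((v (n + 1) - S (v n)) - P (v (n + 1) - S (v n)))
    have eS : S (v n - P (v n)) = S (v n) - S (P (v n)) := map_sub S _ _
    have eP : P (v (n + 1) - S (v n)) = P (v (n + 1)) - P (S (v n)) := map_sub P _ _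
    rw [eS, eP, hSP]
    abel
  -- scalar recurrences
  have hrecα : ∀ n, β * α n - δ n * (α n + γ n) ≤ α (n + 1) := by
    intro n
    set en : LinearMap.range (P : X →ₗ[ℂ] X) :=
      ⟨P (v (n + 1) - S (v n)), LinearMap.mem_range.mpr ⟨_, rfl⟩⟩ with hendef
    have h1 : α (n + 1) = Nu (U (p n) + en) := congrArg Nu (hp n)
    have h2 : Nu (U (p n)) ≤ Nu (U (p n) + en) + Nu en := by
      have h2' := hNuadd (U (p n) + en) (-en)
      rwa [add_neg_cancel_right, hNuneg] at h2'
    have h3 : β * α n ≤ Nu (U (p n)) := hNuU (p n)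
    have h4 : Nu en ≤ Cu * ‖P‖ * ‖v (n + 1) - S (v n)‖ := by
      refine le_trans (hNu2 en) ?_
      have hh : ‖en‖ ≤ ‖P‖ * ‖v (n + 1) - S (v n)‖ := P.le_opNorm _
      calc Cu * ‖en‖ ≤ Cu * (‖P‖ * ‖v (n + 1) - S (v n)‖) :=
            mul_le_mul_of_nonneg_left hh hCu0.le
        _ = Cu * ‖P‖ * ‖v (n + 1) - S (v n)‖ := by ring
    have h5 : Cu * ‖P‖ * ‖v (n + 1) - S (v n)‖ ≤ δ n * (α n + γ n) := by
      have hr0 : 0 ≤ ‖v (n + 1) - S (v n)‖ / ‖v n‖ :=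
        div_nonneg (norm_nonneg _) (norm_nonneg _)
      have hvn : ‖v n‖ ≤ α n + γ n := hvle n
      have hCuP : Cu * ‖P‖ ≤ K := by
        rw [hKdef]; nlinarith [hCs0, norm_nonneg P]
      have hδn : δ n = K * (‖v (n + 1) - S (v n)‖ / ‖v n‖) := rfl
      have e1 : Cu * ‖P‖ * ‖v (n + 1) - S (v n)‖ ≤ K * ‖v (n + 1) - S (v n)‖ :=
        mul_le_mul_of_nonneg_right hCuP (norm_nonneg _)
      have e2 : K * ‖v (n + 1) - S (v n)‖ =
          K * (‖v (n + 1) - S (v n)‖ / ‖v n‖) * ‖v n‖ := by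
        rw [mul_assoc, ← herr n]
      have e3 : K * (‖v (n + 1) - S (v n)‖ / ‖v n‖) * ‖v n‖ ≤
          K * (‖v (n + 1) - S (v n)‖ / ‖v n‖) * (α n + γ n) :=
        mul_le_mul_of_nonneg_left hvn (mul_nonneg hK0 hr0)
      rw [hδn]
      exact e1.trans (e2.le.trans e3)
    rw [h1]
    linarith
  have hrecγ : ∀ n, γ (n + 1) ≤ ρ * γ n + δ n * (α n + γ n) := by
    intro n
    set en : LinearMap.ker (P : X →ₗ[ℂ] X) :=
      ⟨(v (n + 1) - S (v n)) - P (v (n + 1) - S (v n)),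
        by rw [LinearMap.mem_ker, ContinuousLinearMap.coe_coe, map_sub, hPP, sub_self]⟩ with hendef
    have h1 : γ (n + 1) = Ns (V (q n) + en) := congrArg Ns (hq n)
    have h2 : Ns (V (q n) + en) ≤ Ns (V (q n)) + Ns en := hNsadd _ _
    have h3 : Ns (V (q n)) ≤ ρ * γ n := hNsV (q n)
    have h4 : Ns en ≤ Cs * ((1 + ‖P‖) * ‖v (n + 1) - S (v n)‖) := by
      refine le_trans (hNs2 en) ?_
      have hh : ‖en‖ ≤ (1 + ‖P‖) * ‖v (n + 1) - S (v n)‖ := by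
        have hh1 : ‖en‖ ≤ ‖v (n + 1) - S (v n)‖ + ‖P (v (n + 1) - S (v n))‖ :=
          norm_sub_le _ _
        have hh2 : ‖P (v (n + 1) - S (v n))‖ ≤ ‖P‖ * ‖v (n + 1) - S (v n)‖ :=
          P.le_opNorm _
        nlinarith [norm_nonneg (v (n + 1) - S (v n))]
      exact mul_le_mul_of_nonneg_left hh hCs0.le
    have h5 : Cs * ((1 + ‖P‖) * ‖v (n + 1) - S (v n)‖) ≤ δ n * (α n + γ n) := by
      have hr0 : 0 ≤ ‖v (n + 1) - S (v n)‖ / ‖v n‖ :=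
        div_nonneg (norm_nonneg _) (norm_nonneg _)
      have hvn : ‖v n‖ ≤ α n + γ n := hvle n
      have hCsP : Cs * (1 + ‖P‖) ≤ K := by
        rw [hKdef]; nlinarith [hCu0, norm_nonneg P]
      have hδn : δ n = K * (‖v (n + 1) - S (v n)‖ / ‖v n‖) := rfl
      have e1 : Cs * ((1 + ‖P‖) * ‖v (n + 1) - S (v n)‖) ≤ K * ‖v (n + 1) - S (v n)‖ := by
        rw [← mul_assoc]
        exact mul_le_mul_of_nonneg_right hCsP (norm_nonneg _)
      have e2 : K * ‖v (n + 1) - S (v n)‖ =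
          K * (‖v (n + 1) - S (v n)‖ / ‖v n‖) * ‖v n‖ := by
        rw [mul_assoc, ← herr n]
      have e3 : K * (‖v (n + 1) - S (v n)‖ / ‖v n‖) * ‖v n‖ ≤
          K * (‖v (n + 1) - S (v n)‖ / ‖v n‖) * (α n + γ n) :=
        mul_le_mul_of_nonneg_left hvn (mul_nonneg hK0 hr0)
      rw [hδn]
      exact e1.trans (e2.le.trans e3)
    rw [h1]
    linarith
  -- apply the scalar dichotomy
  rcases scalar_dichotomy' hρ0 hρβ hα0 hγ0 hδ0 hpos hrecα hrecγ hδtend with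
    ⟨⟨n₁, hcone⟩, hrt⟩ | ⟨⟨n₁, hlt⟩, hst⟩
  · -- alternative (i)
    left
    have hαpos : ∀ n, n₁ ≤ n → 0 < α n := by
      intro n hn
      have h1 := hpos n
      have h2 := hcone n hn
      linarith
    constructor
    · -- P-component dominates
      intro C
      have hC'0 : (0:ℝ) < max C 0 + 1 := by
        have : (0:ℝ) ≤ max C 0 := le_max_right _ _
        linarith
      have hCC' : C ≤ max C 0 + 1 := by
        have : C ≤ max C 0 := le_max_left _ _
        linarith
      have hev : ∀ᶠ n in atTop, γ n / α n < 1 / ((max C 0 + 1) * Cu) :=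
        hrt.eventually (eventually_lt_nhds (by positivity))
      filter_upwards [hev, eventually_ge_atTop n₁] with n h1 h2
      have hαn := hαpos n h2
      have hγα : γ n = γ n / α n * α n := (div_mul_cancel₀ _ hαn.ne').symm
      have hq1 : ‖v n - P (v n)‖ ≤ γ n := hNs1 (q n)
      have hp1 : α n ≤ Cu * ‖P (v n)‖ := hNu2 (p n)
      have hr0 : 0 ≤ γ n / α n := div_nonneg (hγ0 n) (hα0 n)
      rw [lt_div_iff₀ (by positivity)] at h1
      have hpn0 : 0 ≤ ‖P (v n)‖ := norm_nonneg _
      have hqn0 : 0 ≤ ‖v n - P (v n)‖ := norm_nonneg _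
      -- C‖q‖ ≤ C'‖q‖ ≤ C' γ ≤ C' r Cu ‖p‖ ≤ ‖p‖
      have e1 : γ n ≤ γ n / α n * (Cu * ‖P (v n)‖) :=
        le_trans (le_of_eq hγα) (mul_le_mul_of_nonneg_left hp1 hr0)
      nlinarith [mul_le_mul_of_nonneg_left e1 hC'0.le,
        mul_le_mul_of_nonneg_right h1.le hpn0,
        mul_le_mul_of_nonneg_left hq1 hC'0.le,
        mul_le_mul_of_nonneg_right hCC' hqn0]
    · -- liminf bound
      rcases lt_or_ge 0 b with hb | hb
      swap
      · rw [ENNReal.ofReal_eq_zero.mpr hb]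
        exact zero_le
      have hb'1 : b < (b + β) / 2 := by linarith
      have hb'2 : (b + β) / 2 < β := by linarith
      have hb'0 : 0 < (b + β) / 2 := by linarith
      set b' := (b + β) / 2 with hb'def
      have hev2 : ∀ᶠ n in atTop, δ n ≤ (β - b') / 2 ∧ n₁ ≤ n := by
        filter_upwards [hδtend.eventually
            (eventually_le_nhds (show (0:ℝ) < (β - b') / 2 by linarith)),
          eventually_ge_atTop n₁] with n e1 e2
        exact ⟨e1, e2⟩
      obtain ⟨n₂, hn₂⟩ := hev2.exists_forall_of_atTop
      have hgrow : ∀ n, n₂ ≤ n → b' * α n ≤ α (n + 1) := by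
        intro n hn
        obtain ⟨hδn, hn1⟩ := hn₂ n hn
        have hcn := hcone n hn1
        have hra := hrecα n
        have hαn := hα0 n
        have hγn := hγ0 n
        have e1 : δ n * (α n + γ n) ≤ δ n * (2 * α n) :=
          mul_le_mul_of_nonneg_left (by linarith) (hδ0 n)
        have e2 : δ n * (2 * α n) ≤ (β - b') / 2 * (2 * α n) :=
          mul_le_mul_of_nonneg_right hδn (by linarith)
        nlinarith
      have hind : ∀ k, b' ^ k * α n₂ ≤ α (n₂ + k) := by
        intro k
        induction k with
        | zero => simp
        | succ k ih =>
          have := hgrow (n₂ + k) (Nat.le_add_right _ _)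
          calc b' ^ (k + 1) * α n₂ = b' * (b' ^ k * α n₂) := by ring
            _ ≤ b' * α (n₂ + k) := mul_le_mul_of_nonneg_left ih hb'0.le
            _ ≤ α (n₂ + k + 1) := this
      have hαn₂ : 0 < α n₂ := hαpos n₂ (hn₂ n₂ le_rfl).2
      set M := ‖P‖ + 1 with hMdef
      have hM0 : 0 < M := by have := norm_nonneg P; rw [hMdef]; linarith
      have hupper : ∀ n, α n ≤ Cu * M * ‖v n‖ := by
        intro n
        have e1 : α n ≤ Cu * ‖P (v n)‖ := hNu2 (p n)
        have e2 : ‖P (v n)‖ ≤ ‖P‖ * ‖v n‖ := P.le_opNorm _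
        have e3 : ‖P‖ * ‖v n‖ ≤ M * ‖v n‖ :=
          mul_le_mul_of_nonneg_right (by rw [hMdef]; linarith) (norm_nonneg _)
        calc α n ≤ Cu * ‖P (v n)‖ := e1
          _ ≤ Cu * (M * ‖v n‖) := mul_le_mul_of_nonneg_left (le_trans e2 e3) hCu0.le
          _ = Cu * M * ‖v n‖ := by ring
      set c := α n₂ / (Cu * M * b' ^ n₂) with hcdef
      have hc0 : 0 < c := by
        rw [hcdef]
        have := pow_pos hb'0 n₂
        positivity
      have hlow : ∀ n, n₂ ≤ n → c * b' ^ n ≤ ‖v n‖ := by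
        intro n hn
        have he : b' ^ n = b' ^ (n - n₂) * b' ^ n₂ := by
          rw [← pow_add, Nat.sub_add_cancel hn]
        have h1 : b' ^ (n - n₂) * α n₂ ≤ α n := by
          have := hind (n - n₂)
          rwa [Nat.add_sub_cancel' hn] at this
        have h2 := hupper n
        have hceq : c * b' ^ n = b' ^ (n - n₂) * α n₂ / (Cu * M) := by
          rw [hcdef, he]
          have hbn : (0:ℝ) < b' ^ n₂ := pow_pos hb'0 n₂
          field_simp
        rw [hceq, div_le_iff₀ (by positivity)]
        calc b' ^ (n - n₂) * α n₂ ≤ α n := h1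
          _ ≤ Cu * M * ‖v n‖ := h2
          _ = ‖v n‖ * (Cu * M) := by ring
      have hevb : ∀ᶠ n in atTop,
          ENNReal.ofReal b ≤ ENNReal.ofReal (‖v n‖ ^ (1 / (n : ℝ))) := by
        have hgt1 : 1 < b' / b := by rw [lt_div_iff₀ hb]; linarith
        have h1 : Tendsto (fun n : ℕ => (b' / b) ^ n) atTop atTop :=
          tendsto_pow_atTop_atTop_of_one_lt hgt1
        filter_upwards [h1.eventually_ge_atTop (1 / c), eventually_ge_atTop (max n₂ 1)]
          with n hn1 hn2
        have hnn₂ : n₂ ≤ n := le_trans (le_max_left _ _) hn2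
        have hn1' : 1 ≤ n := le_trans (le_max_right _ _) hn2
        have hn0 : (n:ℝ) ≠ 0 := Nat.cast_ne_zero.mpr (by omega)
        have hbn : b ^ n ≤ ‖v n‖ := by
          have hl := hlow n hnn₂
          rw [div_pow] at hn1
          rw [div_le_div_iff₀ hc0 (pow_pos hb n)] at hn1
          nlinarith [pow_pos hb n]
        apply ENNReal.ofReal_le_ofReal
        calc b = (b ^ n) ^ (1 / (n : ℝ)) := by
              rw [← Real.rpow_natCast b n, ← Real.rpow_mul hb.le, mul_one_div,
                div_self hn0, Real.rpow_one]
          _ ≤ ‖v n‖ ^ (1 / (n : ℝ)) :=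
              Real.rpow_le_rpow (pow_nonneg hb.le n) hbn (by positivity)
      exact le_liminf_of_le (by isBoundedDefault) hevb
  · -- alternative (ii)
    right
    have hγpos : ∀ n, n₁ ≤ n → 0 < γ n :=
      fun n hn => lt_of_le_of_lt (hα0 n) (hlt n hn)
    have hρa' : ρ < a := by
      rcases hρalt with h | h
      · exact h
      · exfalso
        have h0 : γ n₁ ≤ 0 := by
          have h1 := hNs2 (q n₁)
          rw [h (q n₁)] at h1
          simp only [norm_zero, mul_zero] at h1
          show Ns (q n₁) ≤ 0
          rw [h (q n₁)]
          exact h1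
        have := hγpos n₁ le_rfl
        linarith
    have ha0 : 0 < a := lt_of_le_of_lt hρ0 hρa'
    constructor
    · intro ε hε
      have hev : ∀ᶠ n in atTop, α n / γ n < ε / Cs :=
        hst.eventually (eventually_lt_nhds (by positivity))
      filter_upwards [hev, eventually_ge_atTop n₁] with n h1 h2
      have hγn := hγpos n h2
      have e1 : ‖P (v n)‖ ≤ α n := hNu1 (p n)
      have e2 : α n = α n / γ n * γ n := (div_mul_cancel₀ _ hγn.ne').symm
      have e3 : γ n ≤ Cs * ‖v n - P (v n)‖ := hNs2 (q n)
      have e4 : α n ≤ ε / Cs * γ n := by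
        rw [e2]
        exact mul_le_mul_of_nonneg_right h1.le (hγ0 n)
      have e5 : ε / Cs * γ n ≤ ε / Cs * (Cs * ‖v n - P (v n)‖) :=
        mul_le_mul_of_nonneg_left e3 (by positivity)
      have e6 : ε / Cs * (Cs * ‖v n - P (v n)‖) = ε * ‖v n - P (v n)‖ := by
        rw [← mul_assoc, div_mul_cancel₀ ε hCs0.ne']
      linarith
    · -- limsup bound
      have ha'1 : ρ < (ρ + a) / 2 := by linarith
      have ha'2 : (ρ + a) / 2 < a := by linarith
      have ha'0 : 0 < (ρ + a) / 2 := by linarith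
      set a' := (ρ + a) / 2 with ha'def
      have hev2 : ∀ᶠ n in atTop, δ n ≤ (a' - ρ) / 2 ∧ n₁ ≤ n := by
        filter_upwards [hδtend.eventually
            (eventually_le_nhds (show (0:ℝ) < (a' - ρ) / 2 by linarith)),
          eventually_ge_atTop n₁] with n e1 e2
        exact ⟨e1, e2⟩
      obtain ⟨n₂, hn₂⟩ := hev2.exists_forall_of_atTop
      have hdecay : ∀ n, n₂ ≤ n → γ (n + 1) ≤ a' * γ n := by
        intro n hn
        obtain ⟨hδn, hn1⟩ := hn₂ n hn
        have hln := hlt n hn1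
        have hrg := hrecγ n
        have hγn := hγ0 n
        have hαn := hα0 n
        have e1 : δ n * (α n + γ n) ≤ δ n * (2 * γ n) :=
          mul_le_mul_of_nonneg_left (by linarith) (hδ0 n)
        have e2 : δ n * (2 * γ n) ≤ (a' - ρ) / 2 * (2 * γ n) :=
          mul_le_mul_of_nonneg_right hδn (by linarith)
        nlinarith
      have hind : ∀ k, γ (n₂ + k) ≤ a' ^ k * γ n₂ := by
        intro k
        induction k with
        | zero => simp
        | succ k ih =>
          have := hdecay (n₂ + k) (Nat.le_add_right _ _)
          calc γ (n₂ + k + 1) ≤ a' * γ (n₂ + k) := this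
            _ ≤ a' * (a' ^ k * γ n₂) := mul_le_mul_of_nonneg_left ih ha'0.le
            _ = a' ^ (k + 1) * γ n₂ := by ring
      set c' := 2 * γ n₂ / a' ^ n₂ with hc'def
      have hc'0 : 0 < c' := by
        rw [hc'def]
        have h1 := hγpos n₂ (hn₂ n₂ le_rfl).2
        have h2 := pow_pos ha'0 n₂
        positivity
      have hup : ∀ n, n₂ ≤ n → ‖v n‖ ≤ c' * a' ^ n := by
        intro n hn
        have he : a' ^ n = a' ^ (n - n₂) * a' ^ n₂ := by
          rw [← pow_add, Nat.sub_add_cancel hn]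
        have h1 : γ n ≤ a' ^ (n - n₂) * γ n₂ := by
          have := hind (n - n₂)
          rwa [Nat.add_sub_cancel' hn] at this
        have h2 : ‖v n‖ ≤ 2 * γ n := by
          have := hvle n
          have := hlt n (hn₂ n hn).2
          linarith
        have hceq : c' * a' ^ n = 2 * γ n₂ * a' ^ (n - n₂) := by
          rw [hc'def, he]
          have hbn : (0:ℝ) < a' ^ n₂ := pow_pos ha'0 n₂
          field_simp
        rw [hceq]
        nlinarith [pow_nonneg ha'0.le (n - n₂)]
      have hevb : ∀ᶠ n in atTop,
          ENNReal.ofReal (‖v n‖ ^ (1 / (n : ℝ))) ≤ ENNReal.ofReal a := by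
        have hgt1 : 1 < a / a' := by rw [lt_div_iff₀ ha'0]; linarith
        have h1 : Tendsto (fun n : ℕ => (a / a') ^ n) atTop atTop :=
          tendsto_pow_atTop_atTop_of_one_lt hgt1
        filter_upwards [h1.eventually_ge_atTop c', eventually_ge_atTop (max n₂ 1)]
          with n hn1 hn2
        have hnn₂ : n₂ ≤ n := le_trans (le_max_left _ _) hn2
        have hn1' : 1 ≤ n := le_trans (le_max_right _ _) hn2
        have hn0 : (n:ℝ) ≠ 0 := Nat.cast_ne_zero.mpr (by omega)
        have hbn : ‖v n‖ ≤ a ^ n := by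
          have hl := hup n hnn₂
          rw [div_pow, le_div_iff₀ (pow_pos ha'0 n)] at hn1
          nlinarith [pow_pos ha'0 n]
        apply ENNReal.ofReal_le_ofReal
        calc ‖v n‖ ^ (1 / (n : ℝ)) ≤ (a ^ n) ^ (1 / (n : ℝ)) :=
              Real.rpow_le_rpow (norm_nonneg _) hbn (by positivity)
          _ = a := by
              rw [← Real.rpow_natCast a n, ← Real.rpow_mul ha0.le, mul_one_div,
                div_self hn0, Real.rpow_one]
      exact limsup_le_of_le (by isBoundedDefault) hevb
end

section
/- Let X be a complex Banach space, S_p : X → X a bounded linear operator, and let v : ℕ → X satisfy v(n) ≠ 0 for all n and ‖v(n+1) − S_p v(n)‖ / ‖v(n)‖ → 0 as n → ∞. Let 0 < α < β and let P_α, P_β be bounded linear projections on X, each commuting with S_p, satisfying P_α ∘ P_β = P_β ∘ P_α = P_β, such that: the spectrum of the restriction of S_p to ker P_α lies in {|z| < α} and to ran P_α lies in {|z| > α}; the spectrum of the restriction of S_p to ker P_β lies in {|z| < β} and to ran P_β lies in {|z| > β}; and P_* := P_α − P_β has finite-dimensional range. Assume ‖P_α v(n)‖ / ‖(I − P_α)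 v(n)‖ → ∞ and ‖P_β v(n)‖ / ‖(I − P_β) v(n)‖ → 0 as n → ∞ (with the convention that a ratio with vanishing denominator is ∞). Then the normalized sequence v̂(n) := v(n)/‖v(n)‖ is relatively compact in X, and its ω-limit set ⋂_{n≥0} closure{v̂(m) : m ≥ n} is a nonempty compact subset of {x ∈ ran P_* : ‖x‖ = 1}. -/
open Filter Topology

/-- Compactness of the normalized sequence and localization of its ω-limit set in the
unit sphere of the finite-dimensional spectral subspace `ran (P_α - P_β)` (forward
version). -/
theorem omega_limit_in_finite_dimensional_eigenspace
    {X : Type*} [NormedAddCommGroup X] [NormedSpace ℂ X] [CompleteSpace X]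
    (S Pa Pb : X →L[ℂ] X)
    (hPa : Pa ∘L Pa = Pa) (hPb : Pb ∘L Pb = Pb)
    (hSa : S ∘L Pa = Pa ∘L S) (hSb : S ∘L Pb = Pb ∘L S)
    (hab : Pa ∘L Pb = Pb) (hba : Pb ∘L Pa = Pb)
    (α β : ℝ) (hα : 0 < α) (hαβ : α < β)
    -- spectral splitting of `S` by `Pa` at modulus `α`
    (Va : LinearMap.ker (Pa : X →ₗ[ℂ] X) →L[ℂ] LinearMap.ker (Pa : X →ₗ[ℂ] X))
    (hVa : ∀ x : LinearMap.ker (Pa : X →ₗ[ℂ] X), (Va x : X) = S x)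
    (hσVa : spectrum ℂ Va ⊆ {z : ℂ | ‖z‖ < α})
    (Ua : LinearMap.range (Pa : X →ₗ[ℂ] X) →L[ℂ] LinearMap.range (Pa : X →ₗ[ℂ] X))
    (hUa : ∀ x : LinearMap.range (Pa : X →ₗ[ℂ] X), (Ua x : X) = S x)
    (hσUa : spectrum ℂ Ua ⊆ {z : ℂ | α < ‖z‖})
    -- spectral splitting of `S` by `Pb` at modulus `β`
    (Vb : LinearMap.ker (Pb : X →ₗ[ℂ] X) →L[ℂ] LinearMap.ker (Pb : X →ₗ[ℂ] X))
    (hVb : ∀ x : LinearMap.ker (Pb : X →ₗ[ℂ] X), (Vb x : X) = S x)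
    (hσVb : spectrum ℂ Vb ⊆ {z : ℂ | ‖z‖ < β})
    (Ub : LinearMap.range (Pb : X →ₗ[ℂ] X) →L[ℂ] LinearMap.range (Pb : X →ₗ[ℂ] X))
    (hUb : ∀ x : LinearMap.range (Pb : X →ₗ[ℂ] X), (Ub x : X) = S x)
    (hσUb : spectrum ℂ Ub ⊆ {z : ℂ | β < ‖z‖})
    -- `P_* = P_α - P_β` has finite-dimensional range
    (hfin : FiniteDimensional ℂ (LinearMap.range ((Pa - Pb : X →L[ℂ] X) : X →ₗ[ℂ] X)))
    (v : ℕ → X) (hvne : ∀ n, v n ≠ 0)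
    (hv : Tendsto (fun n => ‖v (n + 1) - S (v n)‖ / ‖v n‖) atTop (𝓝 0))
    -- `‖P_α v(n)‖/‖(I-P_α) v(n)‖ → ∞`
    (hXa : ∀ C : ℝ, ∀ᶠ n in atTop, C * ‖v n - Pa (v n)‖ ≤ ‖Pa (v n)‖)
    -- `‖P_β v(n)‖/‖(I-P_β) v(n)‖ → 0`
    (hXb : ∀ ε : ℝ, 0 < ε → ∀ᶠ n in atTop, ‖Pb (v n)‖ ≤ ε * ‖v n - Pb (v n)‖) :
    IsCompact (closure (Set.range fun n : ℕ => ‖v n‖⁻¹ • v n)) ∧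
    (⋂ n : ℕ, closure ((fun m : ℕ => ‖v m‖⁻¹ • v m) '' {m | n ≤ m})).Nonempty ∧
    IsCompact (⋂ n : ℕ, closure ((fun m : ℕ => ‖v m‖⁻¹ • v m) '' {m | n ≤ m})) ∧
    (⋂ n : ℕ, closure ((fun m : ℕ => ‖v m‖⁻¹ • v m) '' {m | n ≤ m})) ⊆
      {x : X | x ∈ LinearMap.range ((Pa - Pb : X →L[ℂ] X) : X →ₗ[ℂ] X) ∧ ‖x‖ = 1} := by
  
  haveI := hfin
  set Q : X →L[ℂ] X := Pa - Pb with hQdef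
  set f : ℕ → X := fun n => ‖v n‖⁻¹ • v n with hfdef
  have hfnorm : ∀ n, ‖f n‖ = 1 := by
    intro n
    have : ‖v n‖ ≠ 0 := norm_ne_zero_iff.mpr (hvne n)
    simp only [hfdef, norm_smul, norm_inv, norm_norm]
    exact inv_mul_cancel₀ this
  -- key estimate
  have key : ∀ ε : ℝ, 0 < ε → ∀ᶠ n in atTop, ‖f n - Q (f n)‖ ≤ ε := by
    intro ε hε
    filter_upwards [hXa ((‖Pa‖ + 1) * (2 / ε)), hXb (ε / (2 * (‖Pb‖ + 1))) (by positivity)]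
      with n hn1 hn2
    have hvn : (0:ℝ) < ‖v n‖ := norm_pos_iff.mpr (hvne n)
    have hPav : ‖Pa (v n)‖ ≤ ‖Pa‖ * ‖v n‖ := Pa.le_opNorm _
    have ha : ‖v n - Pa (v n)‖ ≤ ε / 2 * ‖v n‖ := by
      have h1 : (‖Pa‖ + 1) * (2 / ε) * ‖v n - Pa (v n)‖ ≤ ‖Pa‖ * ‖v n‖ := hn1.trans hPav
      have h1' : ε * ((‖Pa‖ + 1) * (2 / ε) * ‖v n - Pa (v n)‖) ≤ ε * (‖Pa‖ * ‖v n‖) :=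
        mul_le_mul_of_nonneg_left h1 hε.le
      have hrw : ε * ((‖Pa‖ + 1) * (2 / ε) * ‖v n - Pa (v n)‖) =
          2 * (‖Pa‖ + 1) * ‖v n - Pa (v n)‖ := by
        have hεε : ε * (2 / ε) = 2 := by field_simp
        calc ε * ((‖Pa‖ + 1) * (2 / ε) * ‖v n - Pa (v n)‖)
            = (ε * (2 / ε)) * ((‖Pa‖ + 1) * ‖v n - Pa (v n)‖) := by ring
        _ = 2 * (‖Pa‖ + 1) * ‖v n - Pa (v n)‖ := by rw [hεε]; ring
      rw [hrw] at h1'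
      nlinarith [norm_nonneg Pa, mul_pos hε hvn, norm_nonneg (v n - Pa (v n))]
    have hb : ‖Pb (v n)‖ ≤ ε / 2 * ‖v n‖ := by
      have h2 : ‖v n - Pb (v n)‖ ≤ (1 + ‖Pb‖) * ‖v n‖ := by
        have := Pb.le_opNorm (v n)
        calc ‖v n - Pb (v n)‖ ≤ ‖v n‖ + ‖Pb (v n)‖ := norm_sub_le _ _
        _ ≤ (1 + ‖Pb‖) * ‖v n‖ := by nlinarith
      have hp : (0:ℝ) < ‖Pb‖ + 1 := by positivity
      calc ‖Pb (v n)‖ ≤ ε / (2 * (‖Pb‖ + 1)) * ‖v n - Pb (v n)‖ := hn2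
      _ ≤ ε / (2 * (‖Pb‖ + 1)) * ((1 + ‖Pb‖) * ‖v n‖) := by
          apply mul_le_mul_of_nonneg_left h2 (by positivity)
      _ = ε / 2 * ‖v n‖ := by field_simp; ring
    have hvq : ‖v n - Q (v n)‖ ≤ ε * ‖v n‖ := by
      have heq : v n - Q (v n) = (v n - Pa (v n)) + Pb (v n) := by
        simp only [hQdef, ContinuousLinearMap.sub_apply]; abel
      rw [heq]
      calc ‖(v n - Pa (v n)) + Pb (v n)‖ ≤ ‖v n - Pa (v n)‖ + ‖Pb (v n)‖ := norm_add_le _ _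
      _ ≤ ε * ‖v n‖ := by linarith
    have heq2 : f n - Q (f n) = ‖v n‖⁻¹ • (v n - Q (v n)) := by
      simp only [hfdef, smul_sub, Q.map_smul_of_tower]
    rw [heq2, norm_smul_of_nonneg (inv_nonneg.mpr (norm_nonneg _))]
    calc ‖v n‖⁻¹ * ‖v n - Q (v n)‖ ≤ ‖v n‖⁻¹ * (ε * ‖v n‖) := by
          apply mul_le_mul_of_nonneg_left hvq (by positivity)
    _ = ε := by field_simp
  -- the range submodule and the compact ball inside it
  set E : Submodule ℂ X := LinearMap.range ((Pa - Pb : X →L[ℂ] X) : X →ₗ[ℂ] X) with hEdef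
  have hQmem : ∀ x, Q x ∈ E := fun x => ⟨x, rfl⟩
  have hEclosed : IsClosed (E : Set X) := E.closed_of_finiteDimensional
  haveI : ProperSpace E := FiniteDimensional.proper ℂ E
  have hK : IsCompact ((↑) '' (Metric.closedBall (0:E) ‖Q‖) : Set X) :=
    (isCompact_closedBall _ _).image continuous_subtype_val
  have hQfK : ∀ n, Q (f n) ∈ ((↑) '' (Metric.closedBall (0:E) ‖Q‖) : Set X) := by
    intro n
    refine ⟨⟨Q (f n), hQmem _⟩, ?_, rfl⟩
    rw [Metric.mem_closedBall, dist_zero_right]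
    show ‖Q (f n)‖ ≤ ‖Q‖
    calc ‖Q (f n)‖ ≤ ‖Q‖ * ‖f n‖ := Q.le_opNorm _
    _ = ‖Q‖ := by rw [hfnorm n, mul_one]
  -- total boundedness of the range of f
  have htb : TotallyBounded (Set.range f) := by
    rw [Metric.totallyBounded_iff]
    intro ε hε
    obtain ⟨t, htf, htc⟩ := Metric.totallyBounded_iff.mp hK.totallyBounded (ε/2) (by positivity)
    obtain ⟨N, hN⟩ := eventually_atTop.mp (key (ε/2) (by positivity))
    refine ⟨t ∪ f '' Set.Iio N, htf.union ((Set.finite_Iio N).image f), ?_⟩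
    rintro x ⟨m, rfl⟩
    by_cases hm : m < N
    · exact Set.mem_biUnion (Set.mem_union_right _ ⟨m, hm, rfl⟩) (Metric.mem_ball_self hε)
    · push_neg at hm
      obtain ⟨y, hyt, hy⟩ := Set.mem_iUnion₂.mp (htc (hQfK m))
      refine Set.mem_biUnion (Set.mem_union_left _ hyt) ?_
      rw [Metric.mem_ball] at hy ⊢
      calc dist (f m) y ≤ dist (f m) (Q (f m)) + dist (Q (f m)) y := dist_triangle _ _ _
      _ < ε/2 + ε/2 := by
          have := hN m hm
          rw [dist_eq_norm]
          exact add_lt_add_of_le_of_lt this hy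
      _ = ε := by ring
  have hcpt : IsCompact (closure (Set.range f)) :=
    TotallyBounded.isCompact_of_isClosed htb.closure isClosed_closure
  -- tails
  set T : ℕ → Set X := fun n => closure (f '' {m | n ≤ m}) with hTdef
  have hTclosed : ∀ n, IsClosed (T n) := fun n => isClosed_closure
  have hTsub : ∀ n, T n ⊆ closure (Set.range f) := fun n =>
    closure_mono (Set.image_subset_range f _ |>.trans (by exact fun x hx => hx))
  have hTcompact : ∀ n, IsCompact (T n) := fun n =>
    hcpt.of_isClosed_subset (hTclosed n) (hTsub n)
  have hTne : ∀ n, (T n).Nonempty := fun n =>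
    ⟨f n, subset_closure ⟨n, le_refl n, rfl⟩⟩
  have hTanti : ∀ n, T (n+1) ⊆ T n := fun n =>
    closure_mono (Set.image_mono (fun m hm => (Nat.le_succ n).trans hm))
  have hInter_ne : (⋂ n, T n).Nonempty :=
    IsCompact.nonempty_iInter_of_sequence_nonempty_isCompact_isClosed T hTanti hTne
      (hTcompact 0) hTclosed
  have hInter_cpt : IsCompact (⋂ n, T n) :=
    (hTcompact 0).of_isClosed_subset (isClosed_iInter hTclosed) (Set.iInter_subset T 0)
  refine ⟨hcpt, hInter_ne, hInter_cpt, ?_⟩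
  intro x hx
  constructor
  · -- x ∈ E
    have hxcl : x ∈ closure (E : Set X) := by
      rw [Metric.mem_closure_iff]
      intro δ hδ
      obtain ⟨N, hN⟩ := eventually_atTop.mp (key (δ/2) (by positivity))
      have hxT : x ∈ T N := Set.mem_iInter.mp hx N
      obtain ⟨b, ⟨m, hm, rfl⟩, hb⟩ := Metric.mem_closure_iff.mp hxT (δ/2) (by positivity)
      refine ⟨Q (f m), hQmem _, ?_⟩
      calc dist x (Q (f m)) ≤ dist x (f m) + dist (f m) (Q (f m)) := dist_triangle _ _ _
      _ < δ/2 + δ/2 := add_lt_add_of_lt_of_le hb (by rw [dist_eq_norm]; exact hN m hm)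
      _ = δ := by ring
    rwa [hEclosed.closure_eq] at hxcl
  · -- norm 1
    have hsub : T 0 ⊆ Metric.sphere (0:X) 1 := by
      have : f '' {m | 0 ≤ m} ⊆ Metric.sphere (0:X) 1 := by
        rintro _ ⟨m, _, rfl⟩
        rw [Metric.mem_sphere, dist_zero_right]
        exact hfnorm m
      calc T 0 ⊆ closure (Metric.sphere (0:X) 1) := closure_mono this
      _ = Metric.sphere (0:X) 1 := IsClosed.closure_eq Metric.isClosed_sphere
    have := hsub (Set.mem_iInter.mp hx 0)
    rwa [Metric.mem_sphere, dist_zero_right] at this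
end

section
/- Let X be a complex Banach space and S_p : X → X a bounded linear operator. Let 0 ≤ a < b and let P be a bounded linear projection on X commuting with S_p such that the spectrum of V := S_p restricted to ker P lies in {z : |z| ≤ a}, and U := S_p restricted to ran P is invertible with spectrum in {z : |z| ≥ b}; write Q := I − P and U^{−m} := (U^{−1})^m. For a bounded sequence (R_n)_{n≥0} of bounded linear operators on X, λ ∈ (a,b) and n ≥ 0, set δ_n(λ,R) := Σ_{k=1}^{n} λ^{k−n−1} ‖V^{n−k} ∘ Q ∘ R_{k−1}‖ + Σ_{k=n+1}^{∞} λ^{k−n−1} ‖U^{n−k} ∘ P ∘ R_{k−1}‖. Then for every λ ∈ (a,b) there exists a constant M(λ) > 0, depending only on λ, S_p, P, a, b (and not on the sequence (R_n)), such that sup_{n≥0} δ_n(λ,R) ≤ M(λ) · sup_{n≥0} ‖R_n‖ for every bounded sequence (R_n)_{n≥0}. In particular, for each fixed λ ∈ (a,b), δ(λ,R) := sup_{n≥0} δ_n(λ,R) < 1 whenever sup_{n≥0} ‖R_n‖ is sufficiently small. -/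
open Filter Topology

set_option maxHeartbeats 1000000

lemma aux_pow_bound {Y : Type*} [NormedAddCommGroup Y] [NormedSpace ℂ Y] [CompleteSpace Y]
    (T : Y →L[ℂ] Y) {a μ : ℝ} (ha : 0 ≤ a) (haμ : a < μ)
    (hσ : ∀ z ∈ spectrum ℂ T, ‖z‖ ≤ a) :
    ∃ C : ℝ, 1 ≤ C ∧ ∀ m : ℕ, ‖T ^ m‖ ≤ C * μ ^ m := by
  have hμ : 0 < μ := lt_of_le_of_lt ha haμ
  have hr : spectralRadius ℂ T ≤ ENNReal.ofReal a := by
    refine iSup₂_le fun z hz => ?_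
    rw [show ((‖z‖₊ : NNReal) : ENNReal) = ENNReal.ofReal ‖z‖ from (ofReal_norm z).symm]
    exact ENNReal.ofReal_le_ofReal (by simpa using hσ z hz)
  have hlt : spectralRadius ℂ T < ENNReal.ofReal μ :=
    lt_of_le_of_lt hr ((ENNReal.ofReal_lt_ofReal_iff hμ).mpr haμ)
  have htend := spectrum.pow_nnnorm_pow_one_div_tendsto_nhds_spectralRadius T
  have hev : ∀ᶠ n : ℕ in atTop, (‖T ^ n‖₊ : ENNReal) ^ (1 / (n : ℝ)) < ENNReal.ofReal μ :=
    htend.eventually_lt_const hlt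
  obtain ⟨N, hN⟩ := eventually_atTop.mp hev
  set K := max N 1 with hK
  have key : ∀ n : ℕ, K ≤ n → ‖T ^ n‖ ≤ μ ^ n := by
    intro n hn
    have hn1 : 1 ≤ n := le_trans (le_max_right _ _) hn
    have hn0 : (n : ℝ) ≠ 0 := by exact_mod_cast Nat.one_le_iff_ne_zero.mp hn1
    have h1 := (hN n (le_trans (le_max_left _ _) hn)).le
    have h2 : (‖T ^ n‖₊ : ENNReal) ≤ ENNReal.ofReal (μ ^ n) := by
      have h3 := ENNReal.rpow_le_rpow h1 (Nat.cast_nonneg n)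
      rwa [← ENNReal.rpow_mul, one_div, inv_mul_cancel₀ hn0, ENNReal.rpow_one,
        ENNReal.ofReal_rpow_of_pos hμ, Real.rpow_natCast] at h3
    rw [show ((‖T ^ n‖₊ : NNReal) : ENNReal) = ENNReal.ofReal ‖T ^ n‖ from (ofReal_norm _).symm] at h2
    exact (ENNReal.ofReal_le_ofReal_iff (by positivity)).mp h2
  refine ⟨1 + ∑ m ∈ Finset.range K, ‖T ^ m‖ / μ ^ m, ?_, ?_⟩
  · have : (0:ℝ) ≤ ∑ m ∈ Finset.range K, ‖T ^ m‖ / μ ^ m :=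
      Finset.sum_nonneg fun i _ => by positivity
    linarith
  · intro m
    have hsum : (0:ℝ) ≤ ∑ m ∈ Finset.range K, ‖T ^ m‖ / μ ^ m :=
      Finset.sum_nonneg fun i _ => by positivity
    rcases lt_or_ge m K with h | h
    · have h1 : ‖T ^ m‖ / μ ^ m ≤ ∑ i ∈ Finset.range K, ‖T ^ i‖ / μ ^ i :=
        Finset.single_le_sum (f := fun i => ‖T ^ i‖ / μ ^ i) (fun i _ => by positivity) (Finset.mem_range.mpr h)
      have h2 : ‖T ^ m‖ / μ ^ m ≤ 1 + ∑ i ∈ Finset.range K, ‖T ^ i‖ / μ ^ i := by linarith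
      calc ‖T ^ m‖ = ‖T ^ m‖ / μ ^ m * μ ^ m := by
            field_simp
        _ ≤ _ := mul_le_mul_of_nonneg_right h2 (by positivity)
    · calc ‖T ^ m‖ ≤ μ ^ m := key m h
        _ = 1 * μ ^ m := (one_mul _).symm
        _ ≤ _ := mul_le_mul_of_nonneg_right (by linarith) (by positivity)

/-- The smallness quantity `δ(λ,R) = sup_n δ_n(λ,R)` is controlled linearly by
`sup_n ‖R_n‖`, with a constant depending only on `λ`, `S_p`, `P`, `a`, `b`; in
particular it is `< 1` when `sup_n ‖R_n‖` is small enough (forward version). -/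
theorem forward_delta_linear_bound
    {X : Type*} [NormedAddCommGroup X] [NormedSpace ℂ X] [CompleteSpace X]
    (S P : X →L[ℂ] X)
    (hproj : P ∘L P = P) (hcomm : S ∘L P = P ∘L S)
    (a b : ℝ) (ha : 0 ≤ a) (hab : a < b)
    (V : LinearMap.ker (P : X →ₗ[ℂ] X) →L[ℂ] LinearMap.ker (P : X →ₗ[ℂ] X))
    (hV : ∀ x : LinearMap.ker (P : X →ₗ[ℂ] X), (V x : X) = S x)
    (hσV : spectrum ℂ V ⊆ {z : ℂ | ‖z‖ ≤ a})
    (U Ui : LinearMap.range (P : X →ₗ[ℂ] X) →L[ℂ] LinearMap.range (P : X →ₗ[ℂ] X))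
    (hU : ∀ x : LinearMap.range (P : X →ₗ[ℂ] X), (U x : X) = S x)
    (hUUi : U ∘L Ui = 1) (hUiU : Ui ∘L U = 1)
    (hσU : spectrum ℂ U ⊆ {z : ℂ | b ≤ ‖z‖})
    (lam : ℝ) (hlam : lam ∈ Set.Ioo a b) :
    -- `δ R n` is the quantity `δ_n(λ,R)` of the paper
    let δ : (ℕ → X →L[ℂ] X) → ℕ → ℝ := fun R n =>
      (∑ k ∈ Finset.Icc 1 n,
          lam ^ ((k : ℤ) - (n : ℤ) - 1) * ‖(S ^ (n - k)) ∘L (1 - P) ∘L R (k - 1)‖) +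
        ∑' j : ℕ, lam ^ j *
          ‖(LinearMap.range (P : X →ₗ[ℂ] X)).subtypeL ∘L (Ui ^ (j + 1)) ∘L
              (P.codRestrict (LinearMap.range (P : X →ₗ[ℂ] X)) fun x => LinearMap.mem_range_self (P : X →ₗ[ℂ] X) x) ∘L
            R (n + j)‖
    ∃ M : ℝ, 0 < M ∧
      (∀ (R : ℕ → X →L[ℂ] X) (C : ℝ), (∀ n : ℕ, ‖R n‖ ≤ C) →
        ∀ n : ℕ, δ R n ≤ M * C) ∧
      (∃ ε : ℝ, 0 < ε ∧ ∀ R : ℕ → X →L[ℂ] X, (∀ n : ℕ, ‖R n‖ ≤ ε) →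
        ∀ n : ℕ, δ R n < 1) := by
  intro δ
  obtain ⟨hal, hlb⟩ := hlam
  have hlam0 : 0 < lam := lt_of_le_of_lt ha hal
  have hb0 : 0 < b := lt_trans hlam0 hlb
  -- the intermediate radii
  obtain ⟨mu, hamu, hmul⟩ : ∃ mu : ℝ, a < mu ∧ mu < lam :=
    ⟨(a + lam) / 2, by linarith, by linarith⟩
  have hmu0 : 0 < mu := lt_of_le_of_lt ha hamu
  obtain ⟨nu, hnu0, hbnu, hlamnu⟩ : ∃ nu : ℝ, 0 < nu ∧ b⁻¹ < nu ∧ lam * nu < 1 := by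
    refine ⟨2 / (b + lam), by positivity, ?_, ?_⟩
    · rw [inv_eq_one_div, div_lt_div_iff₀ hb0 (by linarith)]; linarith
    · rw [mul_div_assoc', div_lt_one (by linarith)]; linarith
  -- geometric bounds on powers of V
  obtain ⟨C₁, hC₁1, hC₁⟩ := aux_pow_bound V ha hamu (fun z hz => hσV hz)
  -- spectrum of Ui is in the disk of radius b⁻¹
  have hUnit : IsUnit Ui := ⟨(⟨U, Ui, hUUi, hUiU⟩ : (_ →L[ℂ] _)ˣ)⁻¹, rfl⟩
  have hσUi : ∀ z ∈ spectrum ℂ Ui, ‖z‖ ≤ b⁻¹ := by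
    intro z hz
    have hz0 : z ≠ 0 := by
      rintro rfl
      exact (spectrum.zero_notMem_iff ℂ).mpr hUnit hz
    have habs : 0 < ‖z‖ := norm_pos_iff.mpr hz0
    have h1 : (z⁻¹ : ℂ) ∈ spectrum ℂ U := by
      have h := (spectrum.inv_mem_iff
        (r := (Units.mk0 z hz0)⁻¹) (a := (⟨U, Ui, hUUi, hUiU⟩ : (_ →L[ℂ] _)ˣ))).mpr
        (by simpa using hz)
      simpa using h
    have h2 : b ≤ ‖z‖⁻¹ := by simpa [norm_inv] using hσU h1
    calc ‖z‖ = (‖z‖⁻¹)⁻¹ := (inv_inv _).symm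
      _ ≤ b⁻¹ := by gcongr
  have hcl : IsClosed ((LinearMap.range (P : X →ₗ[ℂ] X) : Submodule ℂ X) : Set X) := by
    have hset : ((LinearMap.range (P : X →ₗ[ℂ] X) : Submodule ℂ X) : Set X) = {x : X | P x = x} := by
      ext x
      constructor
      · rintro ⟨y, rfl⟩
        have h := DFunLike.congr_fun hproj y
        simpa [ContinuousLinearMap.comp_apply] using h
      · intro hx
        exact ⟨x, hx⟩
    rw [hset]
    exact isClosed_eq P.continuous continuous_id
  haveI : CompleteSpace ↥(LinearMap.range (P : X →ₗ[ℂ] X)) := hcl.completeSpace_coe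
  obtain ⟨C₂, hC₂1, hC₂⟩ := aux_pow_bound Ui (inv_nonneg.mpr hb0.le) hbnu hσUi
  -- the codomain-restricted complement projection
  have hWmem : ∀ x : X, (1 - P) x ∈ LinearMap.ker (P : X →ₗ[ℂ] X) := by
    intro x
    have h := DFunLike.congr_fun hproj x
    simp only [ContinuousLinearMap.comp_apply] at h
    simp [LinearMap.mem_ker, ContinuousLinearMap.sub_apply, h]
  set W : X →L[ℂ] LinearMap.ker (P : X →ₗ[ℂ] X) := (1 - P).codRestrict (LinearMap.ker (P : X →ₗ[ℂ] X)) hWmem with hW_def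
  set Pc : X →L[ℂ] LinearMap.range (P : X →ₗ[ℂ] X) :=
    P.codRestrict (LinearMap.range (P : X →ₗ[ℂ] X)) fun x => LinearMap.mem_range_self (P : X →ₗ[ℂ] X) x with hPc_def
  -- powers of V agree with powers of S on ker P
  have hVm : ∀ (m : ℕ) (y : LinearMap.ker (P : X →ₗ[ℂ] X)), ((V ^ m) y : X) = (S ^ m) (y : X) := by
    intro m
    induction m with
    | zero => intro y; simp
    | succ m ih =>
      intro y
      rw [pow_succ, pow_succ, ContinuousLinearMap.mul_apply, ContinuousLinearMap.mul_apply,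
        ih (V y), hV y]
  -- operator norm bounds for the two kinds of terms
  have hfirst : ∀ (m : ℕ) (A : X →L[ℂ] X),
      ‖(S ^ m) ∘L (1 - P) ∘L A‖ ≤ C₁ * mu ^ m * (‖W‖ * ‖A‖) := by
    intro m A
    refine ContinuousLinearMap.opNorm_le_bound _
      (by have := norm_nonneg W; have := norm_nonneg A; positivity) fun x => ?_
    have h1 : ((S ^ m) ∘L (1 - P) ∘L A) x = ((V ^ m) (W (A x)) : X) := by
      simp only [ContinuousLinearMap.comp_apply, hVm m (W (A x))]
      rfl
    rw [h1]
    calc ‖((V ^ m) (W (A x)) : X)‖ = ‖(V ^ m) (W (A x))‖ := rfl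
      _ ≤ ‖V ^ m‖ * ‖W (A x)‖ := ContinuousLinearMap.le_opNorm _ _
      _ ≤ ‖V ^ m‖ * (‖W‖ * ‖A x‖) := by
          gcongr; exact ContinuousLinearMap.le_opNorm _ _
      _ ≤ ‖V ^ m‖ * (‖W‖ * (‖A‖ * ‖x‖)) := by
          gcongr; exact ContinuousLinearMap.le_opNorm _ _
      _ ≤ (C₁ * mu ^ m) * (‖W‖ * (‖A‖ * ‖x‖)) := by
          have hq : (0:ℝ) ≤ ‖W‖ * (‖A‖ * ‖x‖) := by positivity
          exact mul_le_mul_of_nonneg_right (hC₁ m) hq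
      _ = C₁ * mu ^ m * (‖W‖ * ‖A‖) * ‖x‖ := by ring
  have hsecond : ∀ (j : ℕ) (A : X →L[ℂ] X),
      ‖(LinearMap.range (P : X →ₗ[ℂ] X)).subtypeL ∘L (Ui ^ (j + 1)) ∘L Pc ∘L A‖ ≤
        C₂ * nu ^ (j + 1) * (‖Pc‖ * ‖A‖) := by
    intro j A
    refine ContinuousLinearMap.opNorm_le_bound _
      (by have := norm_nonneg Pc; have := norm_nonneg A; positivity) fun x => ?_
    have h1 : ((LinearMap.range (P : X →ₗ[ℂ] X)).subtypeL ∘L (Ui ^ (j + 1)) ∘L Pc ∘L A) x =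
        ((Ui ^ (j + 1)) (Pc (A x)) : X) := by
      simp [ContinuousLinearMap.comp_apply, Submodule.subtypeL_apply]
    rw [h1]
    calc ‖((Ui ^ (j + 1)) (Pc (A x)) : X)‖ = ‖(Ui ^ (j + 1)) (Pc (A x))‖ := rfl
      _ ≤ ‖Ui ^ (j + 1)‖ * ‖Pc (A x)‖ := ContinuousLinearMap.le_opNorm _ _
      _ ≤ ‖Ui ^ (j + 1)‖ * (‖Pc‖ * ‖A x‖) := by
          gcongr; exact ContinuousLinearMap.le_opNorm _ _
      _ ≤ ‖Ui ^ (j + 1)‖ * (‖Pc‖ * (‖A‖ * ‖x‖)) := by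
          gcongr; exact ContinuousLinearMap.le_opNorm _ _
      _ ≤ (C₂ * nu ^ (j + 1)) * (‖Pc‖ * (‖A‖ * ‖x‖)) := by
          have hq : (0:ℝ) ≤ ‖Pc‖ * (‖A‖ * ‖x‖) := by positivity
          exact mul_le_mul_of_nonneg_right (hC₂ (j + 1)) hq
      _ = C₂ * nu ^ (j + 1) * (‖Pc‖ * ‖A‖) * ‖x‖ := by ring
  -- the ratio for the first geometric series
  set t : ℝ := mu / lam with ht_def
  have ht0 : 0 ≤ t := by positivity
  have ht1 : t < 1 := by rw [ht_def, div_lt_one hlam0]; exact hmul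
  -- the constants
  set K₁ : ℝ := C₁ * ‖W‖ * lam⁻¹ * (1 - t)⁻¹ with hK₁_def
  set K₂ : ℝ := C₂ * ‖Pc‖ * nu * (1 - lam * nu)⁻¹ with hK₂_def
  have hK₁0 : 0 ≤ K₁ := by
    rw [hK₁_def]
    have h1 : (0:ℝ) ≤ (1 - t)⁻¹ := inv_nonneg.mpr (by linarith)
    have h2 : (0:ℝ) ≤ C₁ := by linarith
    positivity
  have hK₂0 : 0 ≤ K₂ := by
    rw [hK₂_def]
    have h1 : (0:ℝ) ≤ (1 - lam * nu)⁻¹ := inv_nonneg.mpr (by linarith)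
    have h2 : (0:ℝ) ≤ C₂ := by linarith
    positivity
  set M : ℝ := K₁ + K₂ + 1 with hM_def
  have hM0 : 0 < M := by rw [hM_def]; linarith
  have main : ∀ (R : ℕ → X →L[ℂ] X) (C : ℝ), (∀ n : ℕ, ‖R n‖ ≤ C) →
      ∀ n : ℕ, δ R n ≤ M * C := by
    intro R C hR n
    have hC0 : 0 ≤ C := le_trans (norm_nonneg (R 0)) (hR 0)
    -- first sum
    have hterm1 : ∀ k ∈ Finset.Icc 1 n,
        lam ^ ((k : ℤ) - (n : ℤ) - 1) * ‖(S ^ (n - k)) ∘L (1 - P) ∘L R (k - 1)‖ ≤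
          (C₁ * ‖W‖ * C * lam⁻¹) * t ^ (n - k) := by
      intro k hk
      obtain ⟨hk1, hkn⟩ := Finset.mem_Icc.mp hk
      have hz : lam ^ ((k : ℤ) - (n : ℤ) - 1) = lam⁻¹ * (lam ^ (n - k))⁻¹ := by
        have he : (k : ℤ) - (n : ℤ) - 1 = -(((n - k : ℕ) : ℤ) + 1) := by
          have : ((n - k : ℕ) : ℤ) = (n : ℤ) - (k : ℤ) := by
            push_cast [Nat.cast_sub hkn]; ring
          rw [this]; ring
        rw [he, zpow_neg, ← Nat.cast_add_one, zpow_natCast, pow_succ', mul_inv]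
      have hb1 : ‖(S ^ (n - k)) ∘L (1 - P) ∘L R (k - 1)‖ ≤
          C₁ * mu ^ (n - k) * (‖W‖ * C) := by
        refine le_trans (hfirst (n - k) (R (k - 1))) ?_
        have h2 : (0:ℝ) ≤ C₁ := by linarith
        gcongr
        exact hR (k - 1)
      calc lam ^ ((k : ℤ) - (n : ℤ) - 1) * ‖(S ^ (n - k)) ∘L (1 - P) ∘L R (k - 1)‖
          ≤ lam ^ ((k : ℤ) - (n : ℤ) - 1) * (C₁ * mu ^ (n - k) * (‖W‖ * C)) :=
            mul_le_mul_of_nonneg_left hb1 (zpow_nonneg hlam0.le _)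
        _ = (C₁ * ‖W‖ * C * lam⁻¹) * t ^ (n - k) := by
            rw [hz, ht_def, div_pow, div_eq_mul_inv]
            ring
    have hsumt : ∑ k ∈ Finset.Icc 1 n, t ^ (n - k) ≤ (1 - t)⁻¹ := by
      have e1 : ∑ k ∈ Finset.Icc 1 n, t ^ (n - k) = ∑ j ∈ Finset.range n, t ^ j := by
        rw [← Finset.Ico_add_one_right_eq_Icc, Finset.sum_Ico_eq_sum_range]
        try simp only [Nat.add_sub_cancel]
        rw [← Finset.sum_range_reflect (fun j => t ^ j) n]
        refine Finset.sum_congr rfl fun i hi => ?_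
        have hi' := Finset.mem_range.mp hi
        congr 1
        omega
      rw [e1, ← tsum_geometric_of_lt_one ht0 ht1]
      exact Summable.sum_le_tsum _ (fun i _ => by positivity) (summable_geometric_of_lt_one ht0 ht1)
    have hsum1 : (∑ k ∈ Finset.Icc 1 n,
        lam ^ ((k : ℤ) - (n : ℤ) - 1) * ‖(S ^ (n - k)) ∘L (1 - P) ∘L R (k - 1)‖) ≤ K₁ * C := by
      have h0 : (0:ℝ) ≤ C₁ * ‖W‖ * C * lam⁻¹ := by
        have h2 : (0:ℝ) ≤ C₁ := by linarith
        positivity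
      calc (∑ k ∈ Finset.Icc 1 n,
            lam ^ ((k : ℤ) - (n : ℤ) - 1) * ‖(S ^ (n - k)) ∘L (1 - P) ∘L R (k - 1)‖)
          ≤ ∑ k ∈ Finset.Icc 1 n, (C₁ * ‖W‖ * C * lam⁻¹) * t ^ (n - k) :=
            Finset.sum_le_sum hterm1
        _ = (C₁ * ‖W‖ * C * lam⁻¹) * ∑ k ∈ Finset.Icc 1 n, t ^ (n - k) := by
            rw [Finset.mul_sum]
        _ ≤ (C₁ * ‖W‖ * C * lam⁻¹) * (1 - t)⁻¹ := mul_le_mul_of_nonneg_left hsumt h0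
        _ = K₁ * C := by rw [hK₁_def]; ring
    -- second sum
    have hlnu0 : 0 ≤ lam * nu := by positivity
    have hterm2 : ∀ j : ℕ,
        lam ^ j * ‖(LinearMap.range (P : X →ₗ[ℂ] X)).subtypeL ∘L (Ui ^ (j + 1)) ∘L Pc ∘L R (n + j)‖ ≤
          (C₂ * ‖Pc‖ * C * nu) * (lam * nu) ^ j := by
      intro j
      have hb1 : ‖(LinearMap.range (P : X →ₗ[ℂ] X)).subtypeL ∘L (Ui ^ (j + 1)) ∘L Pc ∘L R (n + j)‖ ≤
          C₂ * nu ^ (j + 1) * (‖Pc‖ * C) := by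
        refine le_trans (hsecond j (R (n + j))) ?_
        have h2 : (0:ℝ) ≤ C₂ := by linarith
        gcongr
        exact hR (n + j)
      calc lam ^ j * ‖(LinearMap.range (P : X →ₗ[ℂ] X)).subtypeL ∘L (Ui ^ (j + 1)) ∘L Pc ∘L R (n + j)‖
          ≤ lam ^ j * (C₂ * nu ^ (j + 1) * (‖Pc‖ * C)) :=
            mul_le_mul_of_nonneg_left hb1 (pow_nonneg hlam0.le _)
        _ = (C₂ * ‖Pc‖ * C * nu) * (lam * nu) ^ j := by
            rw [pow_succ, mul_pow]; ring
    have hsmaj : Summable (fun j : ℕ => (C₂ * ‖Pc‖ * C * nu) * (lam * nu) ^ j) :=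
      (summable_geometric_of_lt_one hlnu0 hlamnu).mul_left _
    have hs2 : Summable (fun j : ℕ =>
        lam ^ j * ‖(LinearMap.range (P : X →ₗ[ℂ] X)).subtypeL ∘L (Ui ^ (j + 1)) ∘L Pc ∘L R (n + j)‖) :=
      Summable.of_nonneg_of_le (fun j => by positivity) hterm2 hsmaj
    have hsum2 : (∑' j : ℕ,
        lam ^ j * ‖(LinearMap.range (P : X →ₗ[ℂ] X)).subtypeL ∘L (Ui ^ (j + 1)) ∘L Pc ∘L R (n + j)‖) ≤
          K₂ * C := by
      calc (∑' j : ℕ,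
            lam ^ j * ‖(LinearMap.range (P : X →ₗ[ℂ] X)).subtypeL ∘L (Ui ^ (j + 1)) ∘L Pc ∘L R (n + j)‖)
          ≤ ∑' j : ℕ, (C₂ * ‖Pc‖ * C * nu) * (lam * nu) ^ j := Summable.tsum_le_tsum hterm2 hs2 hsmaj
        _ = (C₂ * ‖Pc‖ * C * nu) * (1 - lam * nu)⁻¹ := by
            rw [tsum_mul_left, tsum_geometric_of_lt_one hlnu0 hlamnu]
        _ = K₂ * C := by rw [hK₂_def]; ring
    have hMC : M * C = K₁ * C + K₂ * C + C := by rw [hM_def]; ring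
    show (∑ k ∈ Finset.Icc 1 n,
          lam ^ ((k : ℤ) - (n : ℤ) - 1) * ‖(S ^ (n - k)) ∘L (1 - P) ∘L R (k - 1)‖) +
        (∑' j : ℕ, lam ^ j *
          ‖(LinearMap.range (P : X →ₗ[ℂ] X)).subtypeL ∘L (Ui ^ (j + 1)) ∘L Pc ∘L R (n + j)‖) ≤ M * C
    linarith
  refine ⟨M, hM0, main, (2 * M)⁻¹, inv_pos.mpr (by linarith), fun R hR n => ?_⟩
  have h := main R (2 * M)⁻¹ hR n
  have hMne : M ≠ 0 := ne_of_gt hM0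
  calc δ R n ≤ M * (2 * M)⁻¹ := h
    _ = 2⁻¹ := by field_simp
    _ < 1 := by norm_num
end

section
/- Let X be a complex Banach space, S_p : X → X a bounded linear operator, and let v : {n ∈ ℤ : n ≤ 0} → X satisfy v(n) ≠ 0 for all n ≤ 0 and ‖v(n+1) − S_p v(n)‖ / ‖v(n)‖ → 0 as n → −∞. Let 0 < α < β and let P_α, P_β be bounded linear projections on X, each commuting with S_p, satisfying P_α ∘ P_β = P_β ∘ P_α = P_β, such that: the spectrum of the restriction of S_p to ker P_α lies in {|z| < α} and to ran P_α lies in {|z| > α}; the spectrum of the restriction of S_p to ker P_β lies in {|z| < β} and to ran P_β lies in {|z| > β}; and P_* := P_α − P_β has finite-dimensional range. Assume ‖P_α v(n)‖ / ‖(I − P_α) v(n)‖ → ∞ and ‖P_β v(n)‖ / ‖(I − P_β) v(n)‖ → 0 as n → −∞ (with the convention that a ratio with vanishing denominator is ∞). Then the normalized sequence v̂(n) := v(n)/‖v(n)‖, n ≤ 0, is relatively compact in X, and its α-limit set ⋂_{n≤0} closure{v̂(m) : m ≤ n} is a nonempty compact subset of {x ∈ ran P_* : ‖x‖ = 1}.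 -/
open Filter Topology

set_option maxHeartbeats 1000000

/-- Compactness of the normalized backward sequence and localization of its α-limit set
in the unit sphere of the finite-dimensional spectral subspace `ran (P_α - P_β)`
(backward version). -/
theorem alpha_limit_in_finite_dimensional_eigenspace
    {X : Type*} [NormedAddCommGroup X] [NormedSpace ℂ X] [CompleteSpace X]
    (S Pa Pb : X →L[ℂ] X)
    (hPa : Pa ∘L Pa = Pa) (hPb : Pb ∘L Pb = Pb)
    (hSa : S ∘L Pa = Pa ∘L S) (hSb : S ∘L Pb = Pb ∘L S)
    (hab : Pa ∘L Pb = Pb) (hba : Pb ∘L Pa = Pb)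
    (α β : ℝ) (hα : 0 < α) (hαβ : α < β)
    -- spectral splitting of `S` by `Pa` at modulus `α`
    (Va : LinearMap.ker (Pa : X →ₗ[ℂ] X) →L[ℂ] LinearMap.ker (Pa : X →ₗ[ℂ] X))
    (hVa : ∀ x : LinearMap.ker (Pa : X →ₗ[ℂ] X), (Va x : X) = S x)
    (hσVa : spectrum ℂ Va ⊆ {z : ℂ | ‖z‖ < α})
    (Ua : LinearMap.range (Pa : X →ₗ[ℂ] X) →L[ℂ] LinearMap.range (Pa : X →ₗ[ℂ] X))
    (hUa : ∀ x : LinearMap.range (Pa : X →ₗ[ℂ] X), (Ua x : X) = S x)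
    (hσUa : spectrum ℂ Ua ⊆ {z : ℂ | α < ‖z‖})
    -- spectral splitting of `S` by `Pb` at modulus `β`
    (Vb : LinearMap.ker (Pb : X →ₗ[ℂ] X) →L[ℂ] LinearMap.ker (Pb : X →ₗ[ℂ] X))
    (hVb : ∀ x : LinearMap.ker (Pb : X →ₗ[ℂ] X), (Vb x : X) = S x)
    (hσVb : spectrum ℂ Vb ⊆ {z : ℂ | ‖z‖ < β})
    (Ub : LinearMap.range (Pb : X →ₗ[ℂ] X) →L[ℂ] LinearMap.range (Pb : X →ₗ[ℂ] X))
    (hUb : ∀ x : LinearMap.range (Pb : X →ₗ[ℂ] X), (Ub x : X) = S x)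
    (hσUb : spectrum ℂ Ub ⊆ {z : ℂ | β < ‖z‖})
    -- `P_* = P_α - P_β` has finite-dimensional range
    (hfin : FiniteDimensional ℂ (LinearMap.range ((Pa - Pb : X →L[ℂ] X) : X →ₗ[ℂ] X)))
    (v : ℤ → X) (hvne : ∀ n : ℤ, n ≤ 0 → v n ≠ 0)
    (hv : Tendsto (fun n : ℤ => ‖v (n + 1) - S (v n)‖ / ‖v n‖) atBot (𝓝 0))
    -- `‖P_α v(n)‖/‖(I-P_α) v(n)‖ → ∞` as `n → -∞`
    (hXa : ∀ C : ℝ, ∀ᶠ n in atBot, C * ‖v n - Pa (v n)‖ ≤ ‖Pa (v n)‖)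
    -- `‖P_β v(n)‖/‖(I-P_β) v(n)‖ → 0` as `n → -∞`
    (hXb : ∀ ε : ℝ, 0 < ε → ∀ᶠ n in atBot, ‖Pb (v n)‖ ≤ ε * ‖v n - Pb (v n)‖) :
    IsCompact (closure ((fun n : ℤ => ‖v n‖⁻¹ • v n) '' {n : ℤ | n ≤ 0})) ∧
    (⋂ n : ℤ, ⋂ _ : n ≤ 0,
      closure ((fun m : ℤ => ‖v m‖⁻¹ • v m) '' {m : ℤ | m ≤ n})).Nonempty ∧
    IsCompact (⋂ n : ℤ, ⋂ _ : n ≤ 0,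
      closure ((fun m : ℤ => ‖v m‖⁻¹ • v m) '' {m : ℤ | m ≤ n})) ∧
    (⋂ n : ℤ, ⋂ _ : n ≤ 0,
      closure ((fun m : ℤ => ‖v m‖⁻¹ • v m) '' {m : ℤ | m ≤ n})) ⊆
      {x : X | x ∈ LinearMap.range ((Pa - Pb : X →L[ℂ] X) : X →ₗ[ℂ] X) ∧ ‖x‖ = 1} := by
  
  classical
  set Q : X →L[ℂ] X := Pa - Pb with hQ
  set u : ℤ → X := fun n => ‖v n‖⁻¹ • v n with hu
  -- norms of normalized vectors
  have hunorm : ∀ m : ℤ, m ≤ 0 → ‖u m‖ = 1 := by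
    intro m hm
    have h : ‖v m‖ ≠ 0 := norm_ne_zero_iff.2 (hvne m hm)
    simp [hu, norm_smul, inv_mul_cancel₀ h]
  have hule : ∀ m : ℤ, ‖u m‖ ≤ 1 := by
    intro m
    by_cases h : v m = 0
    · simp [hu, h]
    · have h' : ‖v m‖ ≠ 0 := norm_ne_zero_iff.2 h
      simp [hu, norm_smul, inv_mul_cancel₀ h']
  -- key approximation: ‖u n - Q (u n)‖ → 0 at -∞
  have key : ∀ ε : ℝ, 0 < ε → ∀ᶠ n in atBot, ‖u n - Q (u n)‖ ≤ ε := by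
    intro ε hε
    have hPa' : (0:ℝ) < ‖Pa‖ + 1 := by positivity
    have hPb' : (0:ℝ) < ‖Pb‖ + 1 := by positivity
    filter_upwards [hXa (2 * (‖Pa‖ + 1) / ε), hXb (ε / (2 * (‖Pb‖ + 1))) (by positivity),
      eventually_le_atBot (0 : ℤ)] with n h1 h2 hn
    have hv0 : (0:ℝ) < ‖v n‖ := norm_pos_iff.mpr (hvne n hn)
    have ha : ‖v n - Pa (v n)‖ ≤ ε / 2 * ‖v n‖ := by
      have hle : 2 * (‖Pa‖ + 1) / ε * ‖v n - Pa (v n)‖ ≤ (‖Pa‖ + 1) * ‖v n‖ :=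
        h1.trans ((Pa.le_opNorm (v n)).trans (by nlinarith [norm_nonneg (v n)]))
      rw [div_mul_eq_mul_div, div_le_iff₀ hε] at hle
      nlinarith [norm_nonneg (v n - Pa (v n))]
    have hb : ‖Pb (v n)‖ ≤ ε / 2 * ‖v n‖ := by
      have h3 : ‖v n - Pb (v n)‖ ≤ (‖Pb‖ + 1) * ‖v n‖ := by
        have h4 := Pb.le_opNorm (v n)
        have h5 := norm_sub_le (v n) (Pb (v n))
        nlinarith [norm_nonneg (v n)]
      have h6 : 0 ≤ ε / (2 * (‖Pb‖ + 1)) := by positivity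
      calc ‖Pb (v n)‖ ≤ ε / (2 * (‖Pb‖ + 1)) * ((‖Pb‖ + 1) * ‖v n‖) :=
            h2.trans (mul_le_mul_of_nonneg_left h3 h6)
        _ = ε / 2 * ‖v n‖ := by field_simp
    have hsum : ‖v n - Q (v n)‖ ≤ ε * ‖v n‖ := by
      have heq : v n - Q (v n) = (v n - Pa (v n)) + Pb (v n) := by
        simp only [hQ, ContinuousLinearMap.sub_apply]; abel
      rw [heq]
      calc ‖(v n - Pa (v n)) + Pb (v n)‖ ≤ ‖v n - Pa (v n)‖ + ‖Pb (v n)‖ := norm_add_le _ _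
        _ ≤ ε * ‖v n‖ := by linarith
    have heq2 : u n - Q (u n) = ‖v n‖⁻¹ • (v n - Q (v n)) := by
      simp only [hu, smul_sub, Q.map_smul_of_tower]
    rw [heq2, norm_smul, norm_inv, norm_norm, inv_mul_le_iff₀ hv0]
    exact hsum.trans_eq (mul_comm _ _)
  -- the compact model set inside the finite-dimensional range of Q
  set F : Submodule ℂ X := LinearMap.range (Q : X →ₗ[ℂ] X) with hF
  haveI : FiniteDimensional ℂ F := hfin
  haveI : ProperSpace F := FiniteDimensional.proper ℂ F
  set K₀ : Set X := Subtype.val '' (Metric.closedBall (0 : F) ‖Q‖) with hK₀def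
  have hK₀ : IsCompact K₀ := (isCompact_closedBall _ _).image continuous_subtype_val
  -- total boundedness of each tail
  have hTB : ∀ n : ℤ, TotallyBounded (u '' {m : ℤ | m ≤ n}) := by
    intro n
    rw [Metric.totallyBounded_iff]
    intro ε hε
    obtain ⟨N, hN⟩ := eventually_atBot.mp (key (ε/3) (by positivity))
    obtain ⟨t₀, ht₀f, ht₀⟩ := Metric.totallyBounded_iff.mp hK₀.totallyBounded (ε/3) (by positivity)
    refine ⟨t₀ ∪ u '' (Set.Icc (min N n) n), ht₀f.union ((Set.finite_Icc _ _).image _), ?_⟩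
    rintro _ ⟨m, hm, rfl⟩
    simp only [Set.mem_setOf_eq] at hm
    by_cases hmN : m ≤ min N n
    · have h1 : ‖u m - Q (u m)‖ ≤ ε/3 := hN m (hmN.trans (min_le_left _ _))
      have hmem : Q (u m) ∈ K₀ := by
        refine ⟨⟨Q (u m), LinearMap.mem_range.mpr ⟨u m, rfl⟩⟩, ?_, rfl⟩
        simp only [Metric.mem_closedBall, dist_zero_right, Submodule.coe_norm]
        calc ‖Q (u m)‖ ≤ ‖Q‖ * ‖u m‖ := Q.le_opNorm _
          _ ≤ ‖Q‖ * 1 := mul_le_mul_of_nonneg_left (hule m) (norm_nonneg _)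
          _ = ‖Q‖ := mul_one _
      obtain ⟨y, hy, hdy⟩ := Set.mem_iUnion₂.mp (ht₀ hmem)
      refine Set.mem_iUnion₂.mpr ⟨y, Or.inl hy, ?_⟩
      rw [Metric.mem_ball] at hdy ⊢
      have hd1 : dist (u m) (Q (u m)) ≤ ε/3 := by rw [dist_eq_norm]; exact h1
      calc dist (u m) y ≤ dist (u m) (Q (u m)) + dist (Q (u m)) y := dist_triangle _ _ _
        _ < ε/3 + ε/3 := by linarith
        _ < ε := by linarith
    · refine Set.mem_iUnion₂.mpr ⟨u m, Or.inr ⟨m, ⟨by omega, hm⟩, rfl⟩, Metric.mem_ball_self hε⟩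
  have hcomp : ∀ n : ℤ, IsCompact (closure (u '' {m : ℤ | m ≤ n})) := fun n =>
    (hTB n).closure.isCompact_of_isClosed isClosed_closure
  have hnecl : ∀ n : ℤ, (closure (u '' {m : ℤ | m ≤ n})).Nonempty := fun n =>
    ⟨u n, subset_closure (Set.mem_image_of_mem u (by simp : n ∈ {m : ℤ | m ≤ n}))⟩
  -- rewrite of the double intersection as a ℕ-indexed nested intersection
  have hiInter : (⋂ n : ℤ, ⋂ _ : n ≤ 0, closure (u '' {m : ℤ | m ≤ n}))
      = ⋂ k : ℕ, closure (u '' {m : ℤ | m ≤ -(k : ℤ)}) := by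
    apply subset_antisymm
    · intro x hx
      simp only [Set.mem_iInter] at hx ⊢
      intro k
      exact hx (-(k : ℤ)) (by omega)
    · intro x hx
      simp only [Set.mem_iInter] at hx ⊢
      intro n hn
      have h := hx (-n).toNat
      have he : -(((-n).toNat : ℕ) : ℤ) = n := by omega
      rwa [he] at h
  refine ⟨hcomp 0, ?_, ?_, ?_⟩
  · -- nonempty
    rw [hiInter]
    refine IsCompact.nonempty_iInter_of_sequence_nonempty_isCompact_isClosed _ ?_
      (fun k => hnecl _) (hcomp _) (fun k => isClosed_closure)
    intro k
    apply closure_mono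
    apply Set.image_mono
    intro m hm
    simp only [Set.mem_setOf_eq] at hm ⊢
    push_cast at hm ⊢
    omega
  · -- compact
    exact IsCompact.of_isClosed_subset (hcomp 0)
      (isClosed_iInter fun n => isClosed_iInter fun _ => isClosed_closure)
      (fun x hx => Set.mem_iInter₂.mp hx (0 : ℤ) le_rfl)
  · -- localization
    intro x hx
    have hx0 : x ∈ closure (u '' {m : ℤ | m ≤ 0}) := Set.mem_iInter₂.mp hx (0 : ℤ) le_rfl
    constructor
    · -- x ∈ range Q
      have hbound : ∀ ε : ℝ, 0 < ε → ‖x - Q x‖ ≤ 0 + ε := by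
        intro ε hε
        rw [zero_add]
        obtain ⟨N, hN⟩ := eventually_atBot.mp (key ε hε)
        have hxN : x ∈ closure (u '' {m : ℤ | m ≤ min N 0}) :=
          Set.mem_iInter₂.mp hx (min N 0) (min_le_right _ _)
        have hsub : u '' {m : ℤ | m ≤ min N 0} ⊆ {y : X | ‖y - Q y‖ ≤ ε} := by
          rintro _ ⟨m, hm, rfl⟩
          exact hN m (le_trans hm (min_le_left _ _))
        have hcl : IsClosed {y : X | ‖y - Q y‖ ≤ ε} :=
          isClosed_le ((continuous_id.sub Q.continuous).norm) continuous_const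
        exact closure_minimal hsub hcl hxN
      have h0 : ‖x - Q x‖ ≤ 0 := le_of_forall_pos_le_add hbound
      have hfix : Q x = x := (sub_eq_zero.mp (norm_le_zero_iff.mp h0)).symm
      exact LinearMap.mem_range.mpr ⟨x, hfix⟩
    · -- ‖x‖ = 1
      have hsub : u '' {m : ℤ | m ≤ 0} ⊆ {y : X | ‖y‖ = 1} := by
        rintro _ ⟨m, hm, rfl⟩
        exact hunorm m hm
      exact closure_minimal hsub (isClosed_eq continuous_norm continuous_const) hx0
end

section
/- Let X be a complex Banach space and S_p : X → X a bounded linear operator. Let 0 ≤ a < b and let P be a bounded linear projection on X commuting with S_p such that the spectrum of V := S_p restricted to ker P lies in {z : |z| ≤ a}, and U := S_p restricted to ran P is invertible with spectrum in {z : |z| ≥ b}; write Q := I − P and U^{−m} := (U^{−1})^m. For a bounded sequence (R_n)_{n<0} of bounded linear operators on X, λ ∈ (a,b) and n ≤ 0, set δ_n(λ,R) := Σ_{k=n+1}^{0} λ^{k−n−1} ‖U^{n−k} ∘ P ∘ R_{k−1}‖ + Σ_{k=−∞}^{n} λ^{k−n−1} ‖V^{n−k} ∘ Q ∘ R_{k−1}‖.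 Then for every λ ∈ (a,b) there exists a constant M(λ) > 0, depending only on λ, S_p, P, a, b (and not on the sequence (R_n)), such that sup_{n≤0} δ_n(λ,R) ≤ M(λ) · sup_{n<0} ‖R_n‖ for every bounded sequence (R_n)_{n<0}. In particular, for each fixed λ ∈ (a,b), sup_{n≤0} δ_n(λ,R) < 1 whenever sup_{n<0} ‖R_n‖ is sufficiently small. -/
open Filter Topology

lemma aux_spectralRadius_le {E : Type*} [NormedAddCommGroup E] [NormedSpace ℂ E]
    (A : E →L[ℂ] E) {c : ℝ}
    (hσ : spectrum ℂ A ⊆ {z : ℂ | ‖z‖ ≤ c}) :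
    spectralRadius ℂ A ≤ ENNReal.ofReal c := by
  rw [spectralRadius]
  refine iSup₂_le fun z hz => ?_
  have h := hσ hz
  simp only [Set.mem_setOf_eq] at h
  rw [← ENNReal.ofReal_coe_nnreal, coe_nnnorm]
  exact ENNReal.ofReal_le_ofReal h

lemma aux_summable {E : Type*} [NormedAddCommGroup E] [NormedSpace ℂ E] [CompleteSpace E]
    (A : E →L[ℂ] E) {c r : ℝ} (hc : 0 ≤ c) (hcr : c < r)
    (h : spectralRadius ℂ A ≤ ENNReal.ofReal c) :
    Summable fun n : ℕ => ‖A ^ n‖ / r ^ n := by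
  have hr : 0 < r := hc.trans_lt hcr
  set t : ℝ := (c + r) / 2 with htdef
  have htpos : 0 < t := by rw [htdef]; positivity
  have hct : c < t := by rw [htdef]; linarith
  have htr : t < r := by rw [htdef]; linarith
  have hlt : spectralRadius ℂ A < ENNReal.ofReal t :=
    h.trans_lt ((ENNReal.ofReal_lt_ofReal_iff htpos).mpr hct)
  have hev : ∀ᶠ n : ℕ in atTop, (‖A ^ n‖₊ : ENNReal) ^ (1 / (n : ℝ)) < ENNReal.ofReal t :=
    (spectrum.pow_nnnorm_pow_one_div_tendsto_nhds_spectralRadius A).eventually_lt_const hlt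
  have hev2 : ∀ᶠ n : ℕ in atTop, ‖A ^ n‖ ≤ t ^ n := by
    filter_upwards [hev, eventually_ge_atTop 1] with n hn hn1
    have hn0 : (n : ℝ) ≠ 0 := Nat.cast_ne_zero.mpr (by omega)
    have h2 := ENNReal.rpow_lt_rpow hn (by positivity : (0 : ℝ) < (n : ℝ))
    rw [← ENNReal.rpow_mul, one_div, inv_mul_cancel₀ hn0, ENNReal.rpow_one,
      show (ENNReal.ofReal t) ^ (n : ℝ) = ENNReal.ofReal (t ^ n) by
        rw [← Real.rpow_natCast t n, ENNReal.ofReal_rpow_of_pos htpos],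
      ← ENNReal.ofReal_coe_nnreal, coe_nnnorm] at h2
    exact le_of_lt ((ENNReal.ofReal_lt_ofReal_iff_of_nonneg (norm_nonneg _)).mp h2)
  have hg : Summable fun n : ℕ => (t / r) ^ n :=
    summable_geometric_of_lt_one (by positivity) (by rw [div_lt_one hr]; exact htr)
  refine summable_of_isBigO_nat hg ?_
  rw [Asymptotics.isBigO_iff]
  refine ⟨1, ?_⟩
  filter_upwards [hev2] with n hn
  rw [one_mul, Real.norm_of_nonneg (by positivity), Real.norm_of_nonneg (by positivity),
    div_pow]
  gcongr

/-- Backward analogue of the linear bound on the smallness quantity: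
`sup_{n ≤ 0} δ_n(λ,R) ≤ M(λ) · sup_{n < 0} ‖R_n‖` with `M(λ)` independent of the
sequence `(R_n)`; in particular `sup_{n ≤ 0} δ_n(λ,R) < 1` when `sup_{n < 0} ‖R_n‖`
is small enough. -/
theorem backward_delta_linear_bound
    {X : Type*} [NormedAddCommGroup X] [NormedSpace ℂ X] [CompleteSpace X]
    (S P : X →L[ℂ] X)
    (hproj : P ∘L P = P) (hcomm : S ∘L P = P ∘L S)
    (a b : ℝ) (ha : 0 ≤ a) (hab : a < b)
    (V : LinearMap.ker (P : X →ₗ[ℂ] X) →L[ℂ] LinearMap.ker (P : X →ₗ[ℂ] X))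
    (hV : ∀ x : LinearMap.ker (P : X →ₗ[ℂ] X), (V x : X) = S x)
    (hσV : spectrum ℂ V ⊆ {z : ℂ | ‖z‖ ≤ a})
    (U Ui : LinearMap.range (P : X →ₗ[ℂ] X) →L[ℂ] LinearMap.range (P : X →ₗ[ℂ] X))
    (hU : ∀ x : LinearMap.range (P : X →ₗ[ℂ] X), (U x : X) = S x)
    (hUUi : U ∘L Ui = 1) (hUiU : Ui ∘L U = 1)
    (hσU : spectrum ℂ U ⊆ {z : ℂ | b ≤ ‖z‖})
    (lam : ℝ) (hlam : lam ∈ Set.Ioo a b) :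
    -- `δ R n` is the quantity `δ_n(λ,R)` of the paper, for `n ≤ 0`
    let δ : (ℤ → X →L[ℂ] X) → ℤ → ℝ := fun R n =>
      (∑ j ∈ Finset.range (-n).toNat, lam ^ j *
          ‖(LinearMap.range (P : X →ₗ[ℂ] X)).subtypeL ∘L (Ui ^ (j + 1)) ∘L
              (P.codRestrict (LinearMap.range (P : X →ₗ[ℂ] X)) fun x => LinearMap.mem_range_self (P : X →ₗ[ℂ] X) x) ∘L
            R (n + j)‖) +
        ∑' i : ℕ, lam ^ (-(i : ℤ) - 1) * ‖(S ^ i) ∘L (1 - P) ∘L R (n - i - 1)‖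
    ∃ M : ℝ, 0 < M ∧
      (∀ (R : ℤ → X →L[ℂ] X) (C : ℝ), (∀ n : ℤ, n < 0 → ‖R n‖ ≤ C) →
        ∀ n : ℤ, n ≤ 0 → δ R n ≤ M * C) ∧
      (∃ ε : ℝ, 0 < ε ∧ ∀ R : ℤ → X →L[ℂ] X, (∀ n : ℤ, n < 0 → ‖R n‖ ≤ ε) →
        ∀ n : ℤ, n ≤ 0 → δ R n < 1) := by
  intro δ
  obtain ⟨hal, hlb⟩ := hlam
  have hb : 0 < b := lt_of_le_of_lt ha hab
  have hl : 0 < lam := lt_of_le_of_lt ha hal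
  have hPP : ∀ x, P (P x) = P x := fun x => DFunLike.congr_fun hproj x
  -- complete subspaces
  haveI hkerC : CompleteSpace (LinearMap.ker (P : X →ₗ[ℂ] X)) :=
    (ContinuousLinearMap.isClosed_ker P).completeSpace_coe
  have hrangeset : ((LinearMap.range (P : X →ₗ[ℂ] X) : Submodule ℂ X) : Set X)
      = ((LinearMap.ker ((1 - P : X →L[ℂ] X) : X →ₗ[ℂ] X) : Submodule ℂ X) : Set X) := by
    ext x
    simp only [SetLike.mem_coe, LinearMap.mem_range, LinearMap.mem_ker,
      ContinuousLinearMap.sub_apply, ContinuousLinearMap.one_apply]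
    constructor
    · rintro ⟨y, rfl⟩
      show P y - P (P y) = 0
      rw [hPP, sub_self]
    · intro hx
      exact ⟨x, (sub_eq_zero.mp hx).symm⟩
  haveI hrgC : CompleteSpace (LinearMap.range (P : X →ₗ[ℂ] X)) := by
    refine (show IsClosed ((LinearMap.range (P : X →ₗ[ℂ] X) : Submodule ℂ X) : Set X) from ?_).completeSpace_coe
    rw [hrangeset]
    exact ContinuousLinearMap.isClosed_ker (1 - P)
  -- spectrum of Ui
  have hσUi : spectrum ℂ Ui ⊆ {z : ℂ | ‖z‖ ≤ 1 / b} := by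
    intro z hz
    set Uu : (LinearMap.range (P : X →ₗ[ℂ] X) →L[ℂ] LinearMap.range (P : X →ₗ[ℂ] X))ˣ := ⟨U, Ui, hUUi, hUiU⟩ with hUu
    have hUnit : IsUnit Ui := ⟨Uu⁻¹, rfl⟩
    have hz0 : z ≠ 0 := by
      rintro rfl
      exact (spectrum.zero_notMem_iff ℂ).mpr hUnit hz
    have hiff := spectrum.inv_mem_iff (r := (Units.mk0 z hz0)⁻¹) (a := Uu)
    simp only [inv_inv, Units.val_inv_eq_inv_val, Units.val_mk0] at hiff
    have hinv : (z⁻¹ : ℂ) ∈ spectrum ℂ U := hiff.mpr hz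
    have hb' := hσU hinv
    simp only [Set.mem_setOf_eq, norm_inv] at hb' ⊢
    have habs : 0 < ‖z‖ := norm_pos_iff.mpr hz0
    rw [le_div_iff₀ hb]
    calc ‖z‖ * b ≤ ‖z‖ * (‖z‖)⁻¹ :=
          mul_le_mul_of_nonneg_left hb' habs.le
      _ = 1 := mul_inv_cancel₀ (ne_of_gt habs)
  -- summability
  have hVsum : Summable fun i : ℕ => ‖V ^ i‖ / lam ^ i :=
    aux_summable V ha hal (aux_spectralRadius_le V hσV)
  have hUisum0 : Summable fun n : ℕ => ‖Ui ^ n‖ / (1 / lam) ^ n :=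
    aux_summable Ui (c := 1 / b) (r := 1 / lam) (by positivity)
      (one_div_lt_one_div_of_lt hl hlb) (aux_spectralRadius_le Ui hσUi)
  have hUisum : Summable fun n : ℕ => ‖Ui ^ n‖ * lam ^ n := by
    refine hUisum0.congr fun n => ?_
    field_simp
    rw [one_div, inv_pow, mul_assoc, inv_mul_cancel₀ (pow_ne_zero _ hl.ne'), mul_one]
  have hUisum1 : Summable fun j : ℕ => lam ^ j * ‖Ui ^ (j + 1)‖ := by
    have h1 := (summable_nat_add_iff 1).mpr hUisum
    refine (h1.mul_left lam⁻¹).congr fun j => ?_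
    rw [pow_succ]
    field_simp
    ring
  set K1 : ℝ := ∑' j : ℕ, lam ^ j * ‖Ui ^ (j + 1)‖ with hK1def
  set K2 : ℝ := ∑' i : ℕ, ‖V ^ i‖ / lam ^ i with hK2def
  have hK1 : 0 ≤ K1 := tsum_nonneg fun j => by positivity
  have hK2 : 0 ≤ K2 := tsum_nonneg fun i => by positivity
  set M : ℝ := K1 * ‖P‖ + lam⁻¹ * ‖1 - P‖ * K2 + 1 with hMdef
  have hM : 0 < M := by
    have h1 : 0 ≤ K1 * ‖P‖ := mul_nonneg hK1 (norm_nonneg _)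
    have h2 : 0 ≤ lam⁻¹ * ‖1 - P‖ * K2 :=
      mul_nonneg (mul_nonneg (inv_nonneg.mpr hl.le) (norm_nonneg _)) hK2
    rw [hMdef]; linarith
  -- membership of (1-P) x in ker P
  have hmem : ∀ x : X, (1 - P) x ∈ LinearMap.ker (P : X →ₗ[ℂ] X) := by
    intro x
    rw [LinearMap.mem_ker]
    show P ((1 - P) x) = 0
    simp only [ContinuousLinearMap.sub_apply, ContinuousLinearMap.one_apply, map_sub, hPP,
      sub_self]
  have hScoe : ∀ (i : ℕ) (x : X),
      (S ^ i) ((1 - P) x) = (((V ^ i) ⟨(1 - P) x, hmem x⟩ : LinearMap.ker (P : X →ₗ[ℂ] X)) : X) := by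
    intro i
    induction i with
    | zero => intro x; simp
    | succ k ih =>
      intro x
      rw [pow_succ' S k, ContinuousLinearMap.mul_apply, ih x, ← hV, ←
        ContinuousLinearMap.mul_apply, ← pow_succ']
  have hSbound : ∀ (i : ℕ) (W : X →L[ℂ] X),
      ‖(S ^ i) ∘L (1 - P) ∘L W‖ ≤ ‖V ^ i‖ * (‖1 - P‖ * ‖W‖) := by
    intro i W
    refine ContinuousLinearMap.opNorm_le_bound _ (by positivity) fun x => ?_
    rw [ContinuousLinearMap.comp_apply, ContinuousLinearMap.comp_apply, hScoe i (W x)]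
    have h1 : ‖(1 - P) (W x)‖ ≤ ‖1 - P‖ * (‖W‖ * ‖x‖) :=
      ((1 - P).le_opNorm _).trans (mul_le_mul_of_nonneg_left (W.le_opNorm x) (norm_nonneg _))
    calc ‖(((V ^ i) ⟨(1 - P) (W x), hmem (W x)⟩ : LinearMap.ker (P : X →ₗ[ℂ] X)) : X)‖
        = ‖(V ^ i) ⟨(1 - P) (W x), hmem (W x)⟩‖ := rfl
      _ ≤ ‖V ^ i‖ * ‖(⟨(1 - P) (W x), hmem (W x)⟩ : LinearMap.ker (P : X →ₗ[ℂ] X))‖ :=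
          (V ^ i).le_opNorm _
      _ = ‖V ^ i‖ * ‖(1 - P) (W x)‖ := rfl
      _ ≤ ‖V ^ i‖ * (‖1 - P‖ * (‖W‖ * ‖x‖)) :=
          mul_le_mul_of_nonneg_left h1 (norm_nonneg (V ^ i))
      _ = ‖V ^ i‖ * (‖1 - P‖ * ‖W‖) * ‖x‖ := by ring
  have hUbound : ∀ (j : ℕ) (W : X →L[ℂ] X),
      ‖(LinearMap.range (P : X →ₗ[ℂ] X)).subtypeL ∘L (Ui ^ (j + 1)) ∘L
          (P.codRestrict (LinearMap.range (P : X →ₗ[ℂ] X)) fun x => LinearMap.mem_range_self (P : X →ₗ[ℂ] X) x) ∘L W‖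
        ≤ ‖Ui ^ (j + 1)‖ * (‖P‖ * ‖W‖) := by
    intro j W
    refine ContinuousLinearMap.opNorm_le_bound _ (by positivity) fun x => ?_
    rw [ContinuousLinearMap.comp_apply, ContinuousLinearMap.comp_apply,
      ContinuousLinearMap.comp_apply, Submodule.subtypeL_apply]
    have h1 : ‖P (W x)‖ ≤ ‖P‖ * (‖W‖ * ‖x‖) :=
      (P.le_opNorm _).trans (mul_le_mul_of_nonneg_left (W.le_opNorm x) (norm_nonneg _))
    calc ‖(((Ui ^ (j + 1)) ((P.codRestrict _ _) (W x)) : LinearMap.range (P : X →ₗ[ℂ] X)) : X)‖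
        = ‖(Ui ^ (j + 1)) ((P.codRestrict _ _) (W x))‖ := rfl
      _ ≤ ‖Ui ^ (j + 1)‖ * ‖(P.codRestrict (LinearMap.range (P : X →ₗ[ℂ] X))
            fun x => LinearMap.mem_range_self (P : X →ₗ[ℂ] X) x) (W x)‖ := (Ui ^ (j + 1)).le_opNorm _
      _ = ‖Ui ^ (j + 1)‖ * ‖P (W x)‖ := rfl
      _ ≤ ‖Ui ^ (j + 1)‖ * (‖P‖ * (‖W‖ * ‖x‖)) :=
          mul_le_mul_of_nonneg_left h1 (norm_nonneg (Ui ^ (j + 1)))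
      _ = ‖Ui ^ (j + 1)‖ * (‖P‖ * ‖W‖) * ‖x‖ := by ring
  -- main linear bound
  have hmain : ∀ (R : ℤ → X →L[ℂ] X) (C : ℝ), (∀ n : ℤ, n < 0 → ‖R n‖ ≤ C) →
      ∀ n : ℤ, n ≤ 0 → δ R n ≤ M * C := by
    intro R C hR n hn
    have hC : 0 ≤ C := (norm_nonneg (R (-1))).trans (hR (-1) (by norm_num))
    have hterm1 : ∀ j ∈ Finset.range (-n).toNat,
        lam ^ j * ‖(LinearMap.range (P : X →ₗ[ℂ] X)).subtypeL ∘L (Ui ^ (j + 1)) ∘L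
            (P.codRestrict (LinearMap.range (P : X →ₗ[ℂ] X)) fun x => LinearMap.mem_range_self (P : X →ₗ[ℂ] X) x) ∘L
          R (n + j)‖ ≤ lam ^ j * (‖Ui ^ (j + 1)‖ * (‖P‖ * C)) := by
      intro j hj
      have hj' : (n + j : ℤ) < 0 := by
        have := Finset.mem_range.mp hj
        omega
      refine mul_le_mul_of_nonneg_left ?_ (by positivity)
      refine (hUbound j (R (n + j))).trans ?_
      exact mul_le_mul_of_nonneg_left
        (mul_le_mul_of_nonneg_left (hR _ hj') (norm_nonneg P)) (norm_nonneg (Ui ^ (j + 1)))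
    have hsum1aux : Summable fun j : ℕ => lam ^ j * (‖Ui ^ (j + 1)‖ * (‖P‖ * C)) := by
      refine (hUisum1.mul_right (‖P‖ * C)).congr fun j => ?_
      ring
    have hsum1 : (∑ j ∈ Finset.range (-n).toNat, lam ^ j *
        ‖(LinearMap.range (P : X →ₗ[ℂ] X)).subtypeL ∘L (Ui ^ (j + 1)) ∘L
            (P.codRestrict (LinearMap.range (P : X →ₗ[ℂ] X)) fun x => LinearMap.mem_range_self (P : X →ₗ[ℂ] X) x) ∘L
          R (n + j)‖) ≤ K1 * (‖P‖ * C) := by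
      have e1 : (∑' j : ℕ, lam ^ j * (‖Ui ^ (j + 1)‖ * (‖P‖ * C))) = K1 * (‖P‖ * C) := by
        rw [hK1def, ← tsum_mul_right]
        exact tsum_congr fun j => by ring
      refine le_trans (Finset.sum_le_sum hterm1) ?_
      rw [← e1]
      exact Summable.sum_le_tsum _ (fun j _ => by positivity) hsum1aux
    have hterm2 : ∀ i : ℕ, lam ^ (-(i : ℤ) - 1) * ‖(S ^ i) ∘L (1 - P) ∘L R (n - i - 1)‖
        ≤ (‖V ^ i‖ / lam ^ i) * (lam⁻¹ * (‖1 - P‖ * C)) := by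
      intro i
      have hzp : (lam : ℝ) ^ (-(i : ℤ) - 1) = (lam ^ i)⁻¹ * lam⁻¹ := by
        rw [zpow_sub₀ (ne_of_gt hl), zpow_neg, zpow_natCast, zpow_one, div_eq_mul_inv]
      have h1 : ‖(S ^ i) ∘L (1 - P) ∘L R (n - i - 1)‖ ≤ ‖V ^ i‖ * (‖1 - P‖ * C) := by
        refine (hSbound i _).trans ?_
        exact mul_le_mul_of_nonneg_left
          (mul_le_mul_of_nonneg_left (hR _ (by omega)) (norm_nonneg (1 - P)))
          (norm_nonneg (V ^ i))
      calc lam ^ (-(i : ℤ) - 1) * ‖(S ^ i) ∘L (1 - P) ∘L R (n - i - 1)‖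
          ≤ lam ^ (-(i : ℤ) - 1) * (‖V ^ i‖ * (‖1 - P‖ * C)) :=
            mul_le_mul_of_nonneg_left h1 (by positivity)
        _ = (‖V ^ i‖ / lam ^ i) * (lam⁻¹ * (‖1 - P‖ * C)) := by
            rw [hzp, div_eq_mul_inv]; ring
    have hgs : Summable fun i : ℕ => (‖V ^ i‖ / lam ^ i) * (lam⁻¹ * (‖1 - P‖ * C)) :=
      hVsum.mul_right _
    have hfs : Summable fun i : ℕ =>
        lam ^ (-(i : ℤ) - 1) * ‖(S ^ i) ∘L (1 - P) ∘L R (n - i - 1)‖ :=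
      Summable.of_nonneg_of_le (fun i => by positivity) hterm2 hgs
    have hsum2 : (∑' i : ℕ, lam ^ (-(i : ℤ) - 1) * ‖(S ^ i) ∘L (1 - P) ∘L R (n - i - 1)‖)
        ≤ K2 * (lam⁻¹ * (‖1 - P‖ * C)) := by
      calc _ ≤ ∑' i : ℕ, (‖V ^ i‖ / lam ^ i) * (lam⁻¹ * (‖1 - P‖ * C)) :=
            Summable.tsum_le_tsum hterm2 hfs hgs
        _ = K2 * (lam⁻¹ * (‖1 - P‖ * C)) := tsum_mul_right
    calc δ R n ≤ K1 * (‖P‖ * C) + K2 * (lam⁻¹ * (‖1 - P‖ * C)) := add_le_add hsum1 hsum2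
      _ = (K1 * ‖P‖ + lam⁻¹ * ‖1 - P‖ * K2) * C := by ring
      _ ≤ M * C := by
          refine mul_le_mul_of_nonneg_right ?_ hC
          rw [hMdef]; linarith
  refine ⟨M, hM, hmain, ⟨1 / (2 * M), by positivity, fun R hR n hn => ?_⟩⟩
  have hMe : M * (1 / (2 * M)) = 1 / 2 := by
    field_simp
  calc δ R n ≤ M * (1 / (2 * M)) := hmain R _ hR n hn
    _ < 1 := by rw [hMe]; norm_num
end
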